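/- arXiv:2509.03050 — 5 statements merged into one kernel-verified Lean document; each statement's English description precedes it below -/
import Mathlib

section
/- For every unit i and every set S ∈ S_i^β, the coefficient estimator is unbiased: E[α̂_{i,S}] = α_{i,S}. -/
noncomputable section

namespace SNIPE

open Finset

/-- The collection `S_i^β` of subsets of the in-neighborhood of unit `i` of size at most `β`. -/
def Sb (n β : ℕ) (Nb : Fin n → Finset (Fin n)) (i : Fin n) : Finset (Finset (Fin n)) :=
  (Nb i).powerset.filter fun s => s.card ≤ β

/-- `g(S) = ∏_{j∈S}(1-p_j) - ∏_{j∈S}(-p_j)`. -/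
def gcoef {n : ℕ} (prob : Fin n → ℝ) (s : Finset (Fin n)) : ℝ :=
  (∏ j ∈ s, (1 - prob j)) - ∏ j ∈ s, (-prob j)

/-- The SNIPE weight `ω_i`, as a function of the treatment realization `z`. -/
def wt (n β : ℕ) (Nb : Fin n → Finset (Fin n)) (prob : Fin n → ℝ) (i : Fin n)
    (z : Fin n → ℝ) : ℝ :=
  ∑ s ∈ Sb n β Nb i, gcoef prob s * ∏ j ∈ s, (z j - prob j) / (prob j * (1 - prob j))

/-- The β-order interaction potential-outcome model `Y_i(z) = ∑_{S∈S_i^β} α_{i,S} ∏_{j∈S} z_j`. -/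
def Ypot (n β : ℕ) (Nb : Fin n → Finset (Fin n)) (α : Fin n → Finset (Fin n) → ℝ)
    (i : Fin n) (z : Fin n → ℝ) : ℝ :=
  ∑ s ∈ Sb n β Nb i, α i s * ∏ j ∈ s, z j

/-- The coefficient estimator `α̂_{i,S}`, where `Yval` is the observed outcome of unit `i`. -/
def alphaHat (n β : ℕ) (Nb : Fin n → Finset (Fin n)) (prob : Fin n → ℝ)
    (Yval : ℝ) (i : Fin n) (s : Finset (Fin n)) (z : Fin n → ℝ) : ℝ :=
  Yval * (∏ j ∈ s, (-1 / prob j)) *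
    ∑ u ∈ (Sb n β Nb i).filter (fun u => s ⊆ u), ∏ l ∈ u, (prob l - z l) / (1 - prob l)

/-- The ℓ2 norm of a finite real vector. -/
def l2 {d : ℕ} (v : Fin d → ℝ) : ℝ := Real.sqrt (∑ k, v k ^ 2)

/-- The covariance of two real random variables. -/
def covr {Ω : Type*} [MeasurableSpace Ω] (μ : MeasureTheory.Measure Ω) (f h : Ω → ℝ) : ℝ :=
  (∫ x, f x * h x ∂μ) - (∫ x, f x ∂μ) * ∫ x, h x ∂μ

/-- A randomized experiment on a population of `n` units joined by a directed interference
network with all self-loops: treatments `Z_i` are mutually independent `Bernoulli(p_i)` random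
variables with `p_i ∈ [p, 1-p]`, outcomes follow the `β`-order interaction model with
coefficients `α`, and each unit carries a deterministic covariate vector `X_i ∈ ℝ^{dX}`. -/
structure Setting (β dX : ℕ) (p : ℝ) where
  n : ℕ
  Ω : Type
  [mΩ : MeasurableSpace Ω]
  μ : MeasureTheory.Measure Ω
  isProb : MeasureTheory.IsProbabilityMeasure μ
  prob : Fin n → ℝ
  prob_mem : ∀ i, p ≤ prob i ∧ prob i ≤ 1 - p
  Z : Fin n → Ω → ℝ
  Z_meas : ∀ i, Measurable (Z i)
  Z_indep : ProbabilityTheory.iIndepFun Z μ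
  Z_range : ∀ i x, Z i x = 0 ∨ Z i x = 1
  Z_prob : ∀ i, μ (Z i ⁻¹' {1}) = ENNReal.ofReal (prob i)
  Nb : Fin n → Finset (Fin n)
  self_mem : ∀ i, i ∈ Nb i
  α : Fin n → Finset (Fin n) → ℝ
  X : Fin n → Fin dX → ℝ

attribute [instance] Setting.mΩ

open MeasureTheory ProbabilityTheory Filter Topology

namespace Setting

variable {β dX : ℕ} {p : ℝ}

/-- The SNIPE weight `ω_i` as a random variable. -/
def w (St : Setting β dX p) (i : Fin St.n) (x : St.Ω) : ℝ :=
  wt St.n β St.Nb St.prob i fun j => St.Z j x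

/-- The observed outcome `Y_i = Y_i(Z)`. -/
def Yo (St : Setting β dX p) (i : Fin St.n) (x : St.Ω) : ℝ :=
  Ypot St.n β St.Nb St.α i fun j => St.Z j x

/-- The total treatment effect `TTE = (1/n) ∑_i (Y_i(1) - Y_i(0))`. -/
def tte (St : Setting β dX p) : ℝ :=
  (St.n : ℝ)⁻¹ * ∑ i,
    (Ypot St.n β St.Nb St.α i (fun _ => 1) - Ypot St.n β St.Nb St.α i fun _ => 0)

/-- The covariate-adjusted SNIPE estimator `TTÊ(θ) = (1/n) ∑_i ω_i (Y_i - θᵀ X_i)`. -/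
def tteHat (St : Setting β dX p) (θ : Fin dX → ℝ) (x : St.Ω) : ℝ :=
  (St.n : ℝ)⁻¹ * ∑ i, St.w i x * (St.Yo i x - ∑ k, θ k * St.X i k)

/-- Expectation with respect to the design measure. -/
def E (St : Setting β dX p) (f : St.Ω → ℝ) : ℝ := ∫ x, f x ∂St.μ

/-- The units `i'` whose in-neighborhood intersects that of `i`. -/
def nbrs (St : Setting β dX p) (i : Fin St.n) : Finset (Fin St.n) :=
  univ.filter fun i' => (St.Nb i ∩ St.Nb i').Nonempty

/-- The coefficient estimator `α̂_{i,S}` as a random variable. -/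
def ahat (St : Setting β dX p) (i : Fin St.n) (s : Finset (Fin St.n)) (x : St.Ω) : ℝ :=
  alphaHat St.n β St.Nb St.prob (St.Yo i x) i s fun j => St.Z j x

/-- The Gram matrix `(1/n) ∑_i ω_i² X_i X_iᵀ` (a random matrix). -/
def regGramAt (St : Setting β dX p) (x : St.Ω) : Matrix (Fin dX) (Fin dX) ℝ :=
  Matrix.of fun k l : Fin dX => (St.n : ℝ)⁻¹ * ∑ i, St.w i x ^ 2 * St.X i k * St.X i l

/-- `E[(1/n) ∑_i ω_i² X_i X_iᵀ]`. -/
def regGram (St : Setting β dX p) : Matrix (Fin dX) (Fin dX) ℝ :=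
  Matrix.of fun k l : Fin dX =>
    St.E fun x => (St.n : ℝ)⁻¹ * ∑ i, St.w i x ^ 2 * St.X i k * St.X i l

/-- The regression-based adjustment coefficient estimator `θ̂_Reg`. -/
def thetaHatReg (St : Setting β dX p) (x : St.Ω) : Fin dX → ℝ :=
  Matrix.mulVec (St.regGramAt x)⁻¹
    fun k => (St.n : ℝ)⁻¹ * ∑ i, St.w i x ^ 2 * St.X i k * St.Yo i x

/-- The population regression-based adjustment coefficient `θ_Reg`. -/
def thetaReg (St : Setting β dX p) : Fin dX → ℝ :=
  Matrix.mulVec St.regGram⁻¹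
    fun k => St.E fun x => (St.n : ℝ)⁻¹ * ∑ i, St.w i x ^ 2 * St.X i k * St.Yo i x

/-- The matrix `G = E[(1/n²) ∑_i ∑_{i' : N_i ∩ N_{i'} ≠ ∅} ω_i ω_{i'} X_i X_{i'}ᵀ]`. -/
def Gmat (St : Setting β dX p) : Matrix (Fin dX) (Fin dX) ℝ :=
  Matrix.of fun k l : Fin dX => St.E fun x =>
    (((St.n : ℝ)) ^ 2)⁻¹ * ∑ i, ∑ i' ∈ St.nbrs i, St.w i x * St.w i' x * St.X i k * St.X i' l

/-- `E[(1/n) ∑_{i' : N_i ∩ N_{i'} ≠ ∅} ω_i ω_{i'} X_{i'} ∏_{k∈S} Z_k]`. -/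
def vimE (St : Setting β dX p) (i : Fin St.n) (s : Finset (Fin St.n)) (k : Fin dX) : ℝ :=
  St.E fun x =>
    (St.n : ℝ)⁻¹ * ∑ i' ∈ St.nbrs i, St.w i x * St.w i' x * St.X i' k * ∏ t ∈ s, St.Z t x

/-- The VIM adjustment coefficient estimator `θ̂_VIM`. -/
def thetaHatVIM (St : Setting β dX p) (x : St.Ω) : Fin dX → ℝ :=
  Matrix.mulVec St.Gmat⁻¹ fun k =>
    (St.n : ℝ)⁻¹ * ∑ i, ∑ s ∈ Sb St.n β St.Nb i, St.ahat i s x * St.vimE i s k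

/-- The population VIM adjustment coefficient `θ_VIM`. -/
def thetaVIM (St : Setting β dX p) : Fin dX → ℝ :=
  Matrix.mulVec St.Gmat⁻¹ fun k => St.E fun x =>
    (((St.n : ℝ)) ^ 2)⁻¹ * ∑ i, ∑ i' ∈ St.nbrs i, St.w i x * St.w i' x * St.X i k * St.Yo i' x

/-- The matrix `M` with `M_{ii'} = ∑_{S ∈ S_i^β ∩ S_{i'}^β} g(S)² ∏_{j∈S} 1/(p_j(1-p_j))`. -/
def Mmat (St : Setting β dX p) : Matrix (Fin St.n) (Fin St.n) ℝ :=
  Matrix.of fun i i' : Fin St.n => ∑ s ∈ Sb St.n β St.Nb i ∩ Sb St.n β St.Nb i',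
    gcoef St.prob s ^ 2 * ∏ j ∈ s, (St.prob j * (1 - St.prob j))⁻¹

/-- The matrix `(1/n) Xᵀ M X`. -/
def XtMX (St : Setting β dX p) : Matrix (Fin dX) (Fin dX) ℝ :=
  Matrix.of fun k l : Fin dX => (St.n : ℝ)⁻¹ * ∑ i, ∑ i', St.X i k * St.Mmat i i' * St.X i' l

/-- Potential outcome under the all-ones assignment. -/
def Y1 (St : Setting β dX p) (i : Fin St.n) : ℝ := Ypot St.n β St.Nb St.α i fun _ => 1

/-- Potential outcome under the all-zeros assignment. -/
def Y0 (St : Setting β dX p) (i : Fin St.n) : ℝ := Ypot St.n β St.Nb St.α i fun _ => 0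

/-- `S_XX = (1/n) ∑_i (X_i - X̄)(X_i - X̄)ᵀ`. -/
def SXX (St : Setting β dX p) : Matrix (Fin dX) (Fin dX) ℝ :=
  Matrix.of fun k l : Fin dX => (St.n : ℝ)⁻¹ * ∑ i,
    (St.X i k - (St.n : ℝ)⁻¹ * ∑ i', St.X i' k) * (St.X i l - (St.n : ℝ)⁻¹ * ∑ i', St.X i' l)

/-- `S_XY(1) = (1/n) ∑_i (X_i - X̄)(Y_i(1) - Ȳ_1)`. -/
def SXY1 (St : Setting β dX p) : Fin dX → ℝ := fun k => (St.n : ℝ)⁻¹ * ∑ i,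
  (St.X i k - (St.n : ℝ)⁻¹ * ∑ i', St.X i' k) * (St.Y1 i - (St.n : ℝ)⁻¹ * ∑ i', St.Y1 i')

/-- `S_XY(0) = (1/n) ∑_i (X_i - X̄)(Y_i(0) - Ȳ_0)`. -/
def SXY0 (St : Setting β dX p) : Fin dX → ℝ := fun k => (St.n : ℝ)⁻¹ * ∑ i,
  (St.X i k - (St.n : ℝ)⁻¹ * ∑ i', St.X i' k) * (St.Y0 i - (St.n : ℝ)⁻¹ * ∑ i', St.Y0 i')

/-- `θ_Lin = (1-p₁) S_XX⁻¹ S_XY(1) + p₁ S_XX⁻¹ S_XY(0)`. -/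
def thetaLin (St : Setting β dX p) (p1 : ℝ) : Fin dX → ℝ := fun k =>
  (1 - p1) * Matrix.mulVec St.SXX⁻¹ St.SXY1 k + p1 * Matrix.mulVec St.SXX⁻¹ St.SXY0 k

/-- The OLS slope coefficient of `Y` on `X` (regression with an intercept) within group `G`. -/
def olsSlope (St : Setting β dX p) (G : Finset (Fin St.n)) (x : St.Ω) : Fin dX → ℝ :=
  Matrix.mulVec
    (Matrix.of fun k l : Fin dX =>
      ∑ i ∈ G, (St.X i k - (G.card : ℝ)⁻¹ * ∑ i' ∈ G, St.X i' k) *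
               (St.X i l - (G.card : ℝ)⁻¹ * ∑ i' ∈ G, St.X i' l))⁻¹
    fun k => ∑ i ∈ G, (St.X i k - (G.card : ℝ)⁻¹ * ∑ i' ∈ G, St.X i' k) *
               (St.Yo i x - (G.card : ℝ)⁻¹ * ∑ i' ∈ G, St.Yo i' x)

/-- Lin's adjustment coefficient estimator
`θ̂_Lin = ((1/n)∑(1-Z_i)) θ̂_1 + ((1/n)∑ Z_i) θ̂_0`. -/
def thetaHatLin (St : Setting β dX p) (x : St.Ω) : Fin dX → ℝ := fun k =>
  ((St.n : ℝ)⁻¹ * ∑ i, (1 - St.Z i x)) *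
      St.olsSlope (univ.filter fun i => St.Z i x = 1) x k +
    ((St.n : ℝ)⁻¹ * ∑ i, St.Z i x) *
      St.olsSlope (univ.filter fun i => St.Z i x = 0) x k

/-- Assumption 3 (boundedness): `X_max ≤ C` and `Y_max ≤ C`. -/
def Assumption3 (St : Setting β dX p) (C : ℝ) : Prop :=
  (∀ i, (∑ k, |St.X i k|) ≤ C) ∧ ∀ i, (∑ s ∈ Sb St.n β St.Nb i, |St.α i s|) ≤ C

/-- Assumption 4 (invertibility): the smallest eigenvalues of `(1/n) XᵀX` and `(1/n) XᵀMX`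
are bounded below by `c`. -/
def Assumption4 (St : Setting β dX p) (c : ℝ) : Prop :=
  (∀ v : Fin dX → ℝ, c * (∑ k, v k ^ 2) ≤
      ∑ k, ∑ l, v k * ((St.n : ℝ)⁻¹ * ∑ i, St.X i k * St.X i l) * v l) ∧
    ∀ v : Fin dX → ℝ, c * (∑ k, v k ^ 2) ≤ ∑ k, ∑ l, v k * St.XtMX k l * v l

/-- All in-degrees and out-degrees of the interference network are at most `D`. -/
def degBdd (St : Setting β dX p) (D : ℕ) : Prop :=
  (∀ i, (St.Nb i).card ≤ D) ∧ ∀ j, (univ.filter fun i => j ∈ St.Nb i).card ≤ D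

end Setting

/-- A sequence of (vector-valued) random variables, over a sequence of experimental settings,
converges to zero in probability. -/
def convInProbToZero {β dX : ℕ} {p : ℝ} (S : ℕ → Setting β dX p)
    (f : ∀ m, (S m).Ω → Fin dX → ℝ) : Prop :=
  ∀ ε : ℝ, 0 < ε →
    Filter.Tendsto (fun m => (S m).μ {x | ε ≤ l2 (f m x)}) Filter.atTop (nhds (0 : ENNReal))

end SNIPE


namespace SNIPE
namespace Setting

variable {β dX : ℕ} {p : ℝ} (St : SNIPE.Setting β dX p)

lemma isProb' : MeasureTheory.IsProbabilityMeasure St.μ := St.isProb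

lemma meas_biInter' (A : Finset (Fin St.n)) :
    MeasurableSet (⋂ l ∈ A, St.Z l ⁻¹' {1}) :=
  MeasurableSet.biInter A.countable_toSet fun l _ => (St.Z_meas l) (measurableSet_singleton 1)

lemma prod_Z_eq_indicator (A : Finset (Fin St.n)) (x : St.Ω) :
    (∏ l ∈ A, St.Z l x) =
      Set.indicator (⋂ l ∈ A, St.Z l ⁻¹' {1}) (fun _ => (1 : ℝ)) x := by
  classical
  by_cases h : ∀ l ∈ A, St.Z l x = 1
  · rw [Set.indicator_of_mem]
    · exact Finset.prod_eq_one h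
    · simp only [Set.mem_iInter, Set.mem_preimage, Set.mem_singleton_iff]
      exact h
  · push_neg at h
    obtain ⟨l, hl, hne⟩ := h
    rw [Set.indicator_of_notMem]
    · exact Finset.prod_eq_zero hl ((St.Z_range l x).resolve_right hne)
    · simp only [Set.mem_iInter, Set.mem_preimage, Set.mem_singleton_iff]
      push_neg
      exact ⟨l, hl, hne⟩

lemma integrable_prod_Z (A : Finset (Fin St.n)) :
    MeasureTheory.Integrable (fun x => ∏ l ∈ A, St.Z l x) St.μ := by
  have := St.isProb'
  have h : MeasureTheory.Integrable
      (Set.indicator (⋂ l ∈ A, St.Z l ⁻¹' {1}) (fun _ => (1 : ℝ))) St.μ :=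
    (MeasureTheory.integrable_const 1).indicator (St.meas_biInter' A)
  exact h.congr (Filter.Eventually.of_forall fun x => (St.prod_Z_eq_indicator A x).symm)

lemma integral_prod_Z (h0 : ∀ l, 0 ≤ St.prob l) (A : Finset (Fin St.n)) :
    ∫ x, ∏ l ∈ A, St.Z l x ∂St.μ = ∏ l ∈ A, St.prob l := by
  have := St.isProb'
  have h1 : ∫ x, ∏ l ∈ A, St.Z l x ∂St.μ
      = ∫ x, Set.indicator (⋂ l ∈ A, St.Z l ⁻¹' {1}) (fun _ => (1 : ℝ)) x ∂St.μ :=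
    MeasureTheory.integral_congr_ae
      (Filter.Eventually.of_forall fun x => St.prod_Z_eq_indicator A x)
  rw [h1, MeasureTheory.integral_indicator_const (1 : ℝ) (St.meas_biInter' A)]
  rw [MeasureTheory.measureReal_def, St.Z_indep.measure_inter_preimage_eq_mul A (fun l _ => measurableSet_singleton 1)]
  have h2 : ∀ l ∈ A, St.μ (St.Z l ⁻¹' {1}) = ENNReal.ofReal (St.prob l) :=
    fun l _ => St.Z_prob l
  rw [Finset.prod_congr rfl h2, smul_eq_mul, mul_one, ENNReal.toReal_prod]
  exact Finset.prod_congr rfl fun l _ => ENNReal.toReal_ofReal (h0 l)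

lemma affine_expand (a b : Fin St.n → ℝ) (A : Finset (Fin St.n)) (x : St.Ω) :
    ∏ l ∈ A, (a l + b l * St.Z l x)
      = ∑ t ∈ A.powerset, (∏ l ∈ t, a l) *
          ((∏ l ∈ A \ t, b l) * ∏ l ∈ A \ t, St.Z l x) := by
  rw [Finset.prod_add]
  exact Finset.sum_congr rfl fun t _ => by rw [Finset.prod_mul_distrib]

lemma integrable_affine (a b : Fin St.n → ℝ) (A : Finset (Fin St.n)) :
    MeasureTheory.Integrable (fun x => ∏ l ∈ A, (a l + b l * St.Z l x)) St.μ := by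
  have h : MeasureTheory.Integrable (fun x => ∑ t ∈ A.powerset,
      (∏ l ∈ t, a l) * ((∏ l ∈ A \ t, b l) * ∏ l ∈ A \ t, St.Z l x)) St.μ :=
    MeasureTheory.integrable_finset_sum _ fun t _ =>
      ((St.integrable_prod_Z (A \ t)).const_mul _).const_mul _
  exact h.congr (Filter.Eventually.of_forall fun x => (St.affine_expand a b A x).symm)

lemma integral_affine (h0 : ∀ l, 0 ≤ St.prob l) (a b : Fin St.n → ℝ)
    (A : Finset (Fin St.n)) :
    ∫ x, ∏ l ∈ A, (a l + b l * St.Z l x) ∂St.μ = ∏ l ∈ A, (a l + b l * St.prob l) := by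
  rw [MeasureTheory.integral_congr_ae
      (Filter.Eventually.of_forall fun x => St.affine_expand a b A x)]
  rw [MeasureTheory.integral_finset_sum _ fun t _ =>
      ((St.integrable_prod_Z (A \ t)).const_mul _).const_mul _]
  rw [Finset.prod_add]
  refine Finset.sum_congr rfl fun t _ => ?_
  rw [MeasureTheory.integral_const_mul, MeasureTheory.integral_const_mul,
    St.integral_prod_Z h0 (A \ t), Finset.prod_mul_distrib]

/-- Auxiliary `a` coefficient. -/
def aTU (T : Finset (Fin St.n)) : Fin St.n → ℝ := fun l =>
  if l ∈ T then 0 else St.prob l / (1 - St.prob l)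

/-- Auxiliary `b` coefficient. -/
def bTU (T U : Finset (Fin St.n)) : Fin St.n → ℝ := fun l =>
  if l ∈ T then (if l ∈ U then -1 else 1) else -(1 - St.prob l)⁻¹

lemma TU_eq (h1 : ∀ l, St.prob l < 1) (T U : Finset (Fin St.n)) (x : St.Ω) :
    (∏ j ∈ T, St.Z j x) * ∏ l ∈ U, (St.prob l - St.Z l x) / (1 - St.prob l)
      = ∏ l ∈ T ∪ U, (St.aTU T l + St.bTU T U l * St.Z l x) := by
  classical
  have hne : ∀ l, (1 : ℝ) - St.prob l ≠ 0 := fun l => sub_ne_zero.mpr (ne_of_lt (h1 l)).symm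
  -- RHS split over T and U \ T
  have hRHS : ∏ l ∈ T ∪ U, (St.aTU T l + St.bTU T U l * St.Z l x)
      = (∏ l ∈ T, (if l ∈ U then (-1 : ℝ) else 1) * St.Z l x) *
        ∏ l ∈ U \ T, (St.prob l - St.Z l x) / (1 - St.prob l) := by
    rw [← Finset.union_sdiff_self_eq_union (s := T) (t := U),
      Finset.prod_union Finset.disjoint_sdiff]
    congr 1
    · refine Finset.prod_congr rfl fun l hl => ?_
      simp only [aTU, bTU, if_pos hl]
      ring
    · refine Finset.prod_congr rfl fun l hl => ?_
      have hlT : l ∉ T := (Finset.mem_sdiff.mp hl).2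
      simp only [aTU, bTU, if_neg hlT]
      ring
  -- LHS: split U over U ∩ T and U \ T
  have hU : ∏ l ∈ U, (St.prob l - St.Z l x) / (1 - St.prob l)
      = (∏ l ∈ U ∩ T, (St.prob l - St.Z l x) / (1 - St.prob l)) *
        ∏ l ∈ U \ T, (St.prob l - St.Z l x) / (1 - St.prob l) := by
    rw [← Finset.prod_union (Finset.disjoint_of_subset_left (Finset.inter_subset_right)
      Finset.disjoint_sdiff)]
    congr 1
    ext l
    simp only [Finset.mem_union, Finset.mem_inter, Finset.mem_sdiff]
    tauto
  -- key per-element identity on T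
  have hT : (∏ j ∈ T, St.Z j x) * ∏ l ∈ U ∩ T, (St.prob l - St.Z l x) / (1 - St.prob l)
      = ∏ l ∈ T, (if l ∈ U then (-1 : ℝ) else 1) * St.Z l x := by
    have hsplit : ∏ l ∈ T, (if l ∈ U then (-1 : ℝ) else 1) * St.Z l x
        = (∏ l ∈ T with l ∈ U, (-1 : ℝ) * St.Z l x) * ∏ l ∈ T with ¬ l ∈ U, St.Z l x := by
      rw [← Finset.prod_filter_mul_prod_filter_not T (fun l => l ∈ U)]
      congr 1
      · exact Finset.prod_congr rfl fun l hl => by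
          rw [if_pos (Finset.mem_filter.mp hl).2]
      · exact Finset.prod_congr rfl fun l hl => by
          rw [if_neg (Finset.mem_filter.mp hl).2, one_mul]
    have hTsplit : ∏ j ∈ T, St.Z j x
        = (∏ l ∈ T with l ∈ U, St.Z l x) * ∏ l ∈ T with ¬ l ∈ U, St.Z l x :=
      (Finset.prod_filter_mul_prod_filter_not T (fun l => l ∈ U) _).symm
    have hUT : U ∩ T = T.filter (fun l => l ∈ U) := by
      rw [Finset.filter_mem_eq_inter, Finset.inter_comm]
    rw [hsplit, hTsplit, hUT]
    rw [mul_right_comm, ← Finset.prod_mul_distrib]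
    congr 1
    refine Finset.prod_congr rfl fun l _ => ?_
    rcases St.Z_range l x with h | h <;> rw [h]
    · ring
    · rw [one_mul, mul_one, div_eq_iff (hne l)]; ring
  rw [hRHS, hU, ← mul_assoc, hT]

lemma integrable_TU (h1 : ∀ l, St.prob l < 1) (T U : Finset (Fin St.n)) :
    MeasureTheory.Integrable (fun x =>
      (∏ j ∈ T, St.Z j x) * ∏ l ∈ U, (St.prob l - St.Z l x) / (1 - St.prob l)) St.μ :=
  (St.integrable_affine (St.aTU T) (St.bTU T U) (T ∪ U)).congr
    (Filter.Eventually.of_forall fun x => (St.TU_eq h1 T U x).symm)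

lemma integral_TU (h0 : ∀ l, 0 < St.prob l) (h1 : ∀ l, St.prob l < 1)
    (T U : Finset (Fin St.n)) :
    ∫ x, (∏ j ∈ T, St.Z j x) * ∏ l ∈ U, (St.prob l - St.Z l x) / (1 - St.prob l) ∂St.μ
      = if U ⊆ T then (-1 : ℝ) ^ U.card * ∏ l ∈ T, St.prob l else 0 := by
  classical
  have hne : ∀ l, (1 : ℝ) - St.prob l ≠ 0 := fun l => sub_ne_zero.mpr (ne_of_lt (h1 l)).symm
  rw [MeasureTheory.integral_congr_ae
      (Filter.Eventually.of_forall fun x => St.TU_eq h1 T U x),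
    St.integral_affine (fun l => le_of_lt (h0 l)) _ _ (T ∪ U)]
  rw [← Finset.union_sdiff_self_eq_union (s := T) (t := U),
    Finset.prod_union Finset.disjoint_sdiff]
  by_cases hsub : U ⊆ T
  · rw [if_pos hsub]
    have hempty : U \ T = ∅ := Finset.sdiff_eq_empty_iff_subset.mpr hsub
    rw [hempty, Finset.prod_empty, mul_one]
    have : ∀ l ∈ T, St.aTU T l + St.bTU T U l * St.prob l
        = (if l ∈ U then (-1 : ℝ) else 1) * St.prob l := by
      intro l hl
      simp only [aTU, bTU, if_pos hl]
      ring
    rw [Finset.prod_congr rfl this, Finset.prod_mul_distrib]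
    congr 1
    rw [Finset.prod_ite, Finset.prod_const, Finset.prod_const, one_pow, mul_one]
    congr 1
    rw [Finset.filter_mem_eq_inter, Finset.inter_comm, Finset.inter_eq_left.mpr hsub]
  · rw [if_neg hsub]
    obtain ⟨l, hlU, hlT⟩ : ∃ l, l ∈ U ∧ l ∉ T := by
      by_contra h
      push_neg at h
      exact hsub fun l hl => h l hl
    have hl : l ∈ U \ T := Finset.mem_sdiff.mpr ⟨hlU, hlT⟩
    have : St.aTU T l + St.bTU T U l * St.prob l = 0 := by
      simp only [aTU, bTU, if_neg hlT]
      ring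
    rw [Finset.prod_eq_zero hl this, mul_zero]

end Setting
end SNIPE

open MeasureTheory ProbabilityTheory Filter Finset Topology SNIPE


lemma sum_powerset_neg_one_pow_card_real {γ : Type*} [DecidableEq γ] (x : Finset γ) :
    (∑ m ∈ x.powerset, (-1 : ℝ) ^ m.card) = if x = ∅ then 1 else 0 := by
  have h := Finset.sum_powerset_neg_one_pow_card (x := x)
  have h2 := congrArg (fun z : ℤ => (z : ℝ)) h
  push_cast at h2
  simpa [apply_ite] using h2

lemma sum_powerset_filter_neg_one_pow {γ : Type*} [DecidableEq γ] (s T : Finset γ) :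
    (∑ U ∈ T.powerset with s ⊆ U, (-1 : ℝ) ^ U.card)
      = if T = s then (-1 : ℝ) ^ s.card else 0 := by
  classical
  by_cases hsT : s ⊆ T
  · have hbij : (∑ U ∈ T.powerset with s ⊆ U, (-1 : ℝ) ^ U.card)
        = ∑ V ∈ (T \ s).powerset, (-1 : ℝ) ^ (s.card + V.card) := by
      refine Finset.sum_nbij' (fun U => U \ s) (fun V => s ∪ V) ?_ ?_ ?_ ?_ ?_
      · intro U hU
        rw [Finset.mem_filter, Finset.mem_powerset] at hU
        rw [Finset.mem_powerset]
        exact Finset.sdiff_subset_sdiff hU.1 (Finset.Subset.refl s)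
      · intro V hV
        rw [Finset.mem_powerset] at hV
        rw [Finset.mem_filter, Finset.mem_powerset]
        exact ⟨Finset.union_subset hsT (hV.trans Finset.sdiff_subset),
          Finset.subset_union_left⟩
      · intro U hU
        rw [Finset.mem_filter] at hU
        exact Finset.union_sdiff_of_subset hU.2
      · intro V hV
        rw [Finset.mem_powerset] at hV
        exact Finset.union_sdiff_cancel_left
          ((Finset.disjoint_of_subset_right hV Finset.disjoint_sdiff))
      · intro U hU
        rw [Finset.mem_filter] at hU
        have hc : U.card = s.card + (U \ s).card := by
          rw [← Finset.card_union_of_disjoint Finset.disjoint_sdiff,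
            Finset.union_sdiff_of_subset hU.2]
        rw [hc]
    rw [hbij]
    simp only [pow_add]
    rw [← Finset.mul_sum, sum_powerset_neg_one_pow_card_real]
    by_cases hTs : T = s
    · rw [if_pos hTs, if_pos, mul_one]
      rw [hTs]
      exact Finset.sdiff_self s
    · rw [if_neg hTs, if_neg, mul_zero]
      intro hempty
      exact hTs (Finset.Subset.antisymm (Finset.sdiff_eq_empty_iff_subset.mp hempty) hsT)
  · rw [Finset.filter_false_of_mem, Finset.sum_empty, if_neg]
    · intro h
      exact hsT (by rw [h])
    · intro U hU hsU
      exact hsT (hsU.trans (Finset.mem_powerset.mp hU))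

/-- unbiasedness of the coefficient estimators: for every unit `i` and
every `S ∈ S_i^β`, `E[α̂_(i,S)] = α_(i,S)`. -/
theorem statement_0 (β dX : ℕ) (hβ : 1 ≤ β) (p : ℝ) (hp : 0 < p) (hp' : p ≤ 1 / 2)
    (St : SNIPE.Setting β dX p)
    (i : Fin St.n) (s : Finset (Fin St.n)) (hs : s ∈ SNIPE.Sb St.n β St.Nb i) :
    St.E (St.ahat i s) = St.α i s := by
  classical
  have h0 : ∀ l, 0 < St.prob l := fun l => lt_of_lt_of_le hp (St.prob_mem l).1
  have h1 : ∀ l, St.prob l < 1 := fun l =>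
    lt_of_le_of_lt (St.prob_mem l).2 (by linarith)
  have hpt : ∀ x : St.Ω, St.ahat i s x
      = ∑ T ∈ SNIPE.Sb St.n β St.Nb i,
          ∑ U ∈ (SNIPE.Sb St.n β St.Nb i).filter (fun u => s ⊆ u),
          (St.α i T * ∏ j ∈ s, (-1 / St.prob j)) *
          ((∏ j ∈ T, St.Z j x) * ∏ l ∈ U, (St.prob l - St.Z l x) / (1 - St.prob l)) := by
    intro x
    simp only [Setting.ahat, alphaHat, Setting.Yo, Ypot]
    rw [Finset.sum_mul, Finset.sum_mul]
    refine Finset.sum_congr rfl fun T _ => ?_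
    rw [Finset.mul_sum]
    refine Finset.sum_congr rfl fun U _ => ?_
    ring
  rw [show St.E (St.ahat i s) = ∫ x, St.ahat i s x ∂St.μ from rfl,
    MeasureTheory.integral_congr_ae (Filter.Eventually.of_forall hpt),
    MeasureTheory.integral_finset_sum _ (fun T _ =>
      MeasureTheory.integrable_finset_sum _ (fun U _ =>
        (St.integrable_TU h1 T U).const_mul _))]
  have hterm : ∀ T ∈ SNIPE.Sb St.n β St.Nb i,
      (∫ x, ∑ U ∈ (SNIPE.Sb St.n β St.Nb i).filter (fun u => s ⊆ u),
          (St.α i T * ∏ j ∈ s, (-1 / St.prob j)) *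
          ((∏ j ∈ T, St.Z j x) * ∏ l ∈ U, (St.prob l - St.Z l x) / (1 - St.prob l)) ∂St.μ)
      = (St.α i T * ∏ j ∈ s, (-1 / St.prob j)) *
          ((∏ l ∈ T, St.prob l) * if T = s then (-1 : ℝ) ^ s.card else 0) := by
    intro T hT
    rw [MeasureTheory.integral_finset_sum _ (fun U _ =>
      (St.integrable_TU h1 T U).const_mul _)]
    have hUint : ∀ U ∈ (SNIPE.Sb St.n β St.Nb i).filter (fun u => s ⊆ u),
        (∫ x, (St.α i T * ∏ j ∈ s, (-1 / St.prob j)) *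
          ((∏ j ∈ T, St.Z j x) *
            ∏ l ∈ U, (St.prob l - St.Z l x) / (1 - St.prob l)) ∂St.μ)
        = (St.α i T * ∏ j ∈ s, (-1 / St.prob j)) *
            (if U ⊆ T then (-1 : ℝ) ^ U.card * ∏ l ∈ T, St.prob l else 0) := by
      intro U _
      rw [MeasureTheory.integral_const_mul, St.integral_TU h0 h1 T U]
    rw [Finset.sum_congr rfl hUint, ← Finset.mul_sum]
    congr 1
    have hset : ((SNIPE.Sb St.n β St.Nb i).filter (fun u => s ⊆ u)).filter (fun u => u ⊆ T)
        = T.powerset.filter (fun u => s ⊆ u) := by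
      have hT' := hT
      rw [SNIPE.Sb, Finset.mem_filter, Finset.mem_powerset] at hT'
      ext U
      simp only [SNIPE.Sb, Finset.mem_filter, Finset.mem_powerset]
      constructor
      · rintro ⟨⟨⟨hUN, hUβ⟩, hsU⟩, hUT⟩
        exact ⟨hUT, hsU⟩
      · rintro ⟨hUT, hsU⟩
        exact ⟨⟨⟨hUT.trans hT'.1, (Finset.card_le_card hUT).trans hT'.2⟩, hsU⟩, hUT⟩
    calc (∑ U ∈ (SNIPE.Sb St.n β St.Nb i).filter (fun u => s ⊆ u),
          if U ⊆ T then (-1 : ℝ) ^ U.card * ∏ l ∈ T, St.prob l else 0)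
        = ∑ U ∈ ((SNIPE.Sb St.n β St.Nb i).filter (fun u => s ⊆ u)).filter (fun u => u ⊆ T),
            (-1 : ℝ) ^ U.card * ∏ l ∈ T, St.prob l := (Finset.sum_filter _ _).symm
      _ = (∑ U ∈ T.powerset.filter (fun u => s ⊆ u), (-1 : ℝ) ^ U.card) *
            ∏ l ∈ T, St.prob l := by rw [hset, Finset.sum_mul]
      _ = (∏ l ∈ T, St.prob l) * if T = s then (-1 : ℝ) ^ s.card else 0 := by
            rw [sum_powerset_filter_neg_one_pow, mul_comm]
  rw [Finset.sum_congr rfl hterm, Finset.sum_eq_single_of_mem s hs (fun T _ hTne => by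
    rw [if_neg hTne, mul_zero, mul_zero]), if_pos rfl]
  have hone : (∏ j ∈ s, (-1 / St.prob j)) *
      ((∏ l ∈ s, St.prob l) * (-1 : ℝ) ^ s.card) = 1 := by
    have h2 : (∏ l ∈ s, St.prob l) * (-1 : ℝ) ^ s.card = ∏ j ∈ s, -St.prob j := by
      rw [← Finset.prod_const (-1 : ℝ), ← Finset.prod_mul_distrib]
      exact Finset.prod_congr rfl fun j _ => by ring
    rw [h2, ← Finset.prod_mul_distrib]
    rw [Finset.prod_congr rfl (fun j _ => show (-1 / St.prob j) * -St.prob j = 1 by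
      field_simp [(h0 j).ne'])]
    exact Finset.prod_const_one
  rw [mul_assoc, hone, mul_one]
end
end

section
/- Pathwise (for every realization of the treatment vector Z), the SNIPE estimator equals the average of the nonempty-set coefficient estimators: (1/n) Σ_{i=1}^n Y_i Σ_{S ∈ S_i^β} g(S) ∏_{j∈S} (Z_j − p_j)/(p_j(1−p_j)) = (1/n) Σ_{i=1}^n Σ_{S ∈ S_i^β, S ≠ ∅} α̂_{i,S}. -/
noncomputable section

open MeasureTheory ProbabilityTheory Filter Finset Topology SNIPE

/-- pathwise identity: for every realization of the treatment vector,
the SNIPE estimator equals the average of the nonempty-set coefficient estimators. -/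
theorem statement_1 (n β : ℕ) (hβ : 1 ≤ β) (p : ℝ) (hp : 0 < p) (hp' : p ≤ 1 / 2)
    (prob : Fin n → ℝ) (hprob : ∀ i, p ≤ prob i ∧ prob i ≤ 1 - p)
    (Nb : Fin n → Finset (Fin n)) (hself : ∀ i, i ∈ Nb i)
    (Y : Fin n → ℝ) (z : Fin n → ℝ) (hz : ∀ j, z j = 0 ∨ z j = 1) :
    (n : ℝ)⁻¹ * ∑ i, Y i * ∑ s ∈ SNIPE.Sb n β Nb i, SNIPE.gcoef prob s *
        ∏ j ∈ s, (z j - prob j) / (prob j * (1 - prob j)) =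
      (n : ℝ)⁻¹ * ∑ i, ∑ s ∈ (SNIPE.Sb n β Nb i).filter (fun s => s ≠ ∅),
        SNIPE.alphaHat n β Nb prob (Y i) i s z := by
  have hpj : ∀ j : Fin n, prob j ≠ 0 := fun j => by
    have := (hprob j).1; intro h; rw [h] at this; linarith
  have hpj' : ∀ j : Fin n, (1 : ℝ) - prob j ≠ 0 := fun j => by
    have := (hprob j).2; intro h; have : prob j = 1 := by linarith
    rw [this] at *; linarith [(hprob j).2]
  congr 1
  apply Finset.sum_congr rfl
  intro i _
  set P := SNIPE.Sb n β Nb i with hP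
  -- set fact
  have hsub : ∀ u ∈ P, P.filter (fun s => s ⊆ u) = u.powerset := by
    intro u hu
    have hu' : u ⊆ Nb i ∧ u.card ≤ β := by
      simpa [hP, SNIPE.Sb, Finset.mem_filter, Finset.mem_powerset] using hu
    ext s
    simp only [hP, SNIPE.Sb, Finset.mem_filter, Finset.mem_powerset]
    constructor
    · rintro ⟨-, h⟩; exact h
    · intro h; exact ⟨⟨h.trans hu'.1, (Finset.card_le_card h).trans hu'.2⟩, h⟩
  simp only [SNIPE.alphaHat, mul_assoc]
  rw [← Finset.mul_sum]
  congr 1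
  have key : ∀ u ∈ P,
      SNIPE.gcoef prob u * ∏ j ∈ u, (z j - prob j) / (prob j * (1 - prob j)) =
      ((∏ j ∈ u, ((-1 / prob j) + 1)) - 1) * ∏ l ∈ u, (prob l - z l) / (1 - prob l) := by
    intro u _
    rw [SNIPE.gcoef, sub_mul, sub_mul, one_mul, ← Finset.prod_mul_distrib,
      ← Finset.prod_mul_distrib, ← Finset.prod_mul_distrib]
    congr 1 <;> apply Finset.prod_congr rfl <;> intro j _ <;>
      field_simp [hpj j, hpj' j] <;> ring
  calc ∑ s ∈ P, SNIPE.gcoef prob s * ∏ j ∈ s, (z j - prob j) / (prob j * (1 - prob j))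
      = ∑ u ∈ P, ((∏ j ∈ u, ((-1 / prob j) + 1)) - 1) *
          ∏ l ∈ u, (prob l - z l) / (1 - prob l) := Finset.sum_congr rfl key
    _ = ∑ u ∈ P, ∑ s ∈ P.filter (fun s => s ≠ ∅),
          (if s ⊆ u then (∏ j ∈ s, (-1 / prob j)) * ∏ l ∈ u, (prob l - z l) / (1 - prob l)
           else 0) := by
        apply Finset.sum_congr rfl
        intro u hu
        have : ∑ s ∈ P.filter (fun s => s ≠ ∅),
            (if s ⊆ u then (∏ j ∈ s, (-1 / prob j)) * ∏ l ∈ u, (prob l - z l) / (1 - prob l)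
             else 0)
          = ∑ s ∈ (P.filter (fun s => s ≠ ∅)).filter (fun s => s ⊆ u),
              (∏ j ∈ s, (-1 / prob j)) * ∏ l ∈ u, (prob l - z l) / (1 - prob l) :=
          (Finset.sum_filter _ _).symm
        rw [this, ← Finset.sum_mul]
        have hset : (P.filter (fun s => s ≠ ∅)).filter (fun s => s ⊆ u)
            = u.powerset.erase ∅ := by
          rw [Finset.filter_comm, hsub u hu, Finset.filter_ne']
        rw [hset]
        congr 1
        have h2 : ∑ s ∈ u.powerset.erase ∅, ∏ j ∈ s, (-1 / prob j)
            = (∑ s ∈ u.powerset, ∏ j ∈ s, (-1 / prob j)) - ∏ j ∈ (∅ : Finset (Fin n)), (-1 / prob j) := by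
          apply Finset.sum_erase_eq_sub
          simp
        rw [h2, Finset.prod_empty]
        congr 1
        rw [Finset.prod_add]
        simp
    _ = ∑ s ∈ P.filter (fun s => s ≠ ∅), (∏ j ∈ s, (-1 / prob j)) *
          ∑ u ∈ P.filter (fun u => s ⊆ u), ∏ l ∈ u, (prob l - z l) / (1 - prob l) := by
        rw [Finset.sum_comm]
        apply Finset.sum_congr rfl
        intro s _
        rw [Finset.mul_sum, Finset.sum_filter]
end
end

section
/- For every unit i, E[ω_i] = 0 and E[ω_i²] = Σ_{S ∈ S_i^β} g(S)² ∏_{j∈S} 1/(p_j(1−p_j)); consequently 4 ≤ E[ω_i²] ≤ (e·d_in/(β·p(1−p)))^β. -/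
noncomputable section

open MeasureTheory ProbabilityTheory Filter Finset Topology SNIPE

section Aux

variable {β' dX' : ℕ} {p' : ℝ}

private lemma Z_abs_le (St : SNIPE.Setting β' dX' p') (j : Fin St.n) (x : St.Ω) :
    |St.Z j x| ≤ 1 := by
  rcases St.Z_range j x with h | h <;> rw [h] <;> norm_num

private lemma aff_meas (St : SNIPE.Setting β' dX' p') (A B : Fin St.n → ℝ) (j : Fin St.n) :
    Measurable (fun x => A j + B j * St.Z j x) :=
  measurable_const.add ((St.Z_meas j).const_mul _)

private lemma integrable_affprod (St : SNIPE.Setting β' dX' p') (A B : Fin St.n → ℝ)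
    (U : Finset (Fin St.n)) :
    MeasureTheory.Integrable (fun x => ∏ j ∈ U, (A j + B j * St.Z j x)) St.μ := by
  haveI := St.isProb
  refine MeasureTheory.Integrable.mono'
    (MeasureTheory.integrable_const (∏ j ∈ U, (|A j| + |B j|))) ?_ ?_
  · exact (Finset.measurable_prod U fun j _ => aff_meas St A B j).aestronglyMeasurable
  · refine Filter.Eventually.of_forall fun x => ?_
    rw [Real.norm_eq_abs, Finset.abs_prod]
    refine Finset.prod_le_prod (fun j _ => abs_nonneg _) fun j _ => ?_
    calc |A j + B j * St.Z j x| ≤ |A j| + |B j * St.Z j x| := abs_add_le _ _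
      _ ≤ |A j| + |B j| := by
          rw [abs_mul]
          nlinarith [Z_abs_le St j x, abs_nonneg (B j), abs_nonneg (St.Z j x)]

private lemma integral_Z (St : SNIPE.Setting β' dX' p') (j : Fin St.n)
    (hj : 0 ≤ St.prob j) : ∫ x, St.Z j x ∂St.μ = St.prob j := by
  have hmeas : MeasurableSet (St.Z j ⁻¹' {1}) := St.Z_meas j (measurableSet_singleton 1)
  have heq : ∀ x, St.Z j x = Set.indicator (St.Z j ⁻¹' {1}) (fun _ => (1:ℝ)) x := by
    intro x
    rcases St.Z_range j x with h | h
    · rw [h, Set.indicator_of_notMem]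
      simp [Set.mem_preimage, h]
    · rw [h, Set.indicator_of_mem]
      simp [Set.mem_preimage, h]
  rw [show (fun x => St.Z j x) = fun x => Set.indicator (St.Z j ⁻¹' {1}) (fun _ => (1:ℝ)) x
      from funext heq]
  rw [MeasureTheory.integral_indicator_const _ hmeas, measureReal_def, St.Z_prob j]
  simp [ENNReal.toReal_ofReal hj]

private lemma integral_affprod (St : SNIPE.Setting β' dX' p')
    (hprob : ∀ j, 0 ≤ St.prob j) (A B : Fin St.n → ℝ) (U : Finset (Fin St.n)) :
    ∫ x, ∏ j ∈ U, (A j + B j * St.Z j x) ∂St.μ = ∏ j ∈ U, (A j + B j * St.prob j) := by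
  haveI := St.isProb
  classical
  induction U using Finset.induction_on with
  | empty => simp
  | @insert k U hk ih =>
    have hF : ProbabilityTheory.iIndepFun
        (fun j x => A j + B j * St.Z j x) St.μ :=
      St.Z_indep.comp (fun j t => A j + B j * t)
        (fun j => measurable_const.add (measurable_id.const_mul _))
    have hindep : ProbabilityTheory.IndepFun (∏ j ∈ U, fun x => A j + B j * St.Z j x)
        (fun x => A k + B k * St.Z k x) St.μ :=
      hF.indepFun_finsetProd_of_notMem (fun j => aff_meas St A B j) hk
    have hPeq : (∏ j ∈ U, fun x => A j + B j * St.Z j x)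
        = fun x => ∏ j ∈ U, (A j + B j * St.Z j x) := by
      funext x
      simp [Finset.prod_apply]
    have hPint : MeasureTheory.Integrable (∏ j ∈ U, fun x => A j + B j * St.Z j x) St.μ := by
      rw [hPeq]; exact integrable_affprod St A B U
    have hFint : MeasureTheory.Integrable (fun x => A k + B k * St.Z k x) St.μ := by
      have h := integrable_affprod St A B {k}
      simpa using h
    have hZI : MeasureTheory.Integrable (St.Z k) St.μ := by
      have h := integrable_affprod St (fun _ => 0) (fun _ => 1) {k}
      simpa using h
    have hFval : ∫ x, (A k + B k * St.Z k x) ∂St.μ = A k + B k * St.prob k := by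
      rw [MeasureTheory.integral_add (MeasureTheory.integrable_const _) (hZI.const_mul _),
        MeasureTheory.integral_const, MeasureTheory.integral_const_mul _ _,
        integral_Z St k (hprob k)]
      simp
    have hmul := hindep.integral_mul_eq_mul_integral hPint.aestronglyMeasurable hFint.aestronglyMeasurable
    calc ∫ x, ∏ j ∈ insert k U, (A j + B j * St.Z j x) ∂St.μ
        = ∫ x, ((∏ j ∈ U, fun y => A j + B j * St.Z j y) * fun y => A k + B k * St.Z k y) x
            ∂St.μ := by
          refine MeasureTheory.integral_congr_ae (Filter.Eventually.of_forall fun x => ?_)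
          simp only [Pi.mul_apply, hPeq]
          rw [Finset.prod_insert hk]
          ring
      _ = (∫ x, (∏ j ∈ U, fun y => A j + B j * St.Z j y) x ∂St.μ)
            * ∫ x, (A k + B k * St.Z k x) ∂St.μ := hmul
      _ = (∏ j ∈ U, (A j + B j * St.prob j)) * (A k + B k * St.prob k) := by
          rw [hPeq, ih, hFval]
      _ = ∏ j ∈ insert k U, (A j + B j * St.prob j) := by
          rw [Finset.prod_insert hk]
          ring

private lemma prod_sq_union {ι : Type*} [DecidableEq ι] (s t : Finset ι) (F : ι → ℝ) :
    (∏ j ∈ s, F j) * ∏ j ∈ t, F j =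
      ∏ j ∈ s ∪ t, (if j ∈ s ∩ t then F j ^ 2 else F j) := by
  rw [Finset.prod_ite]
  have h1 : (s ∪ t).filter (fun j => j ∈ s ∩ t) = s ∩ t := by
    ext a
    simp only [Finset.mem_filter, Finset.mem_union, Finset.mem_inter]
    tauto
  have h2 : (s ∪ t).filter (fun j => ¬ j ∈ s ∩ t) = (s \ t) ∪ (t \ s) := by
    ext a
    simp only [Finset.mem_filter, Finset.mem_union, Finset.mem_inter, Finset.mem_sdiff]
    tauto
  have hd : Disjoint (s \ t) (t \ s) := by
    rw [Finset.disjoint_left]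
    intro a ha hb
    rw [Finset.mem_sdiff] at ha hb
    tauto
  have hs : ∏ j ∈ s, F j = (∏ j ∈ s ∩ t, F j) * ∏ j ∈ s \ t, F j := by
    rw [← Finset.prod_union (by
      rw [Finset.disjoint_left]
      intro a ha hb
      rw [Finset.mem_inter] at ha
      rw [Finset.mem_sdiff] at hb
      tauto)]
    refine (Finset.prod_congr ?_ fun _ _ => rfl).symm
    ext a
    simp only [Finset.mem_union, Finset.mem_inter, Finset.mem_sdiff]
    tauto
  have ht : ∏ j ∈ t, F j = (∏ j ∈ s ∩ t, F j) * ∏ j ∈ t \ s, F j := by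
    rw [← Finset.prod_union (by
      rw [Finset.disjoint_left]
      intro a ha hb
      rw [Finset.mem_inter] at ha
      rw [Finset.mem_sdiff] at hb
      tauto)]
    refine (Finset.prod_congr ?_ fun _ _ => rfl).symm
    ext a
    simp only [Finset.mem_union, Finset.mem_inter, Finset.mem_sdiff]
    tauto
  rw [h1, h2, Finset.prod_union hd, hs, ht, Finset.prod_pow]
  ring

private lemma pair_integral (hp : 0 < p') (hp'' : p' ≤ 1/2) (St : SNIPE.Setting β' dX' p')
    (s t : Finset (Fin St.n)) :
    MeasureTheory.Integrable (fun x =>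
      (∏ j ∈ s, (St.Z j x - St.prob j) / (St.prob j * (1 - St.prob j))) *
      ∏ j ∈ t, (St.Z j x - St.prob j) / (St.prob j * (1 - St.prob j))) St.μ ∧
    ∫ x, (∏ j ∈ s, (St.Z j x - St.prob j) / (St.prob j * (1 - St.prob j))) *
      ∏ j ∈ t, (St.Z j x - St.prob j) / (St.prob j * (1 - St.prob j)) ∂St.μ =
      if s = t then ∏ j ∈ s, (St.prob j * (1 - St.prob j))⁻¹ else 0 := by
  classical
  haveI := St.isProb
  have hc : ∀ j : Fin St.n, St.prob j * (1 - St.prob j) ≠ 0 := by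
    intro j
    obtain ⟨h1, h2⟩ := St.prob_mem j
    nlinarith
  set A : Fin St.n → ℝ := fun j =>
    if j ∈ s ∩ t then (St.prob j)^2 / (St.prob j * (1 - St.prob j))^2
    else -(St.prob j) / (St.prob j * (1 - St.prob j)) with hA
  set B : Fin St.n → ℝ := fun j =>
    if j ∈ s ∩ t then (1 - 2 * St.prob j) / (St.prob j * (1 - St.prob j))^2
    else (St.prob j * (1 - St.prob j))⁻¹ with hB
  have hpt : ∀ x, (∏ j ∈ s, (St.Z j x - St.prob j) / (St.prob j * (1 - St.prob j))) *
      (∏ j ∈ t, (St.Z j x - St.prob j) / (St.prob j * (1 - St.prob j))) =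
      ∏ j ∈ s ∪ t, (A j + B j * St.Z j x) := by
    intro x
    rw [prod_sq_union]
    refine Finset.prod_congr rfl fun j hj => ?_
    by_cases h : j ∈ s ∩ t
    · simp only [hA, hB, if_pos h]
      have hcj := hc j
      have hpj := left_ne_zero_of_mul hcj
      have h1pj := right_ne_zero_of_mul hcj
      rcases St.Z_range j x with h0 | h0 <;> rw [h0] <;> field_simp <;> ring
    · simp only [hA, hB, if_neg h]
      ring
  have hval : ∀ j, A j + B j * St.prob j =
      if j ∈ s ∩ t then (St.prob j * (1 - St.prob j))⁻¹ else 0 := by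
    intro j
    by_cases h : j ∈ s ∩ t
    · simp only [hA, hB, if_pos h]
      have hcj := hc j
      have hpj := left_ne_zero_of_mul hcj
      have h1pj := right_ne_zero_of_mul hcj
      field_simp
      ring
    · simp only [hA, hB, if_neg h]
      ring
  constructor
  · exact (integrable_affprod St A B (s ∪ t)).congr
      (Filter.Eventually.of_forall fun x => (hpt x).symm)
  · rw [MeasureTheory.integral_congr_ae (Filter.Eventually.of_forall hpt),
      integral_affprod St (fun j => le_of_lt (lt_of_lt_of_le hp (St.prob_mem j).1)) A B (s ∪ t),
      Finset.prod_congr rfl fun j _ => hval j]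
    by_cases hst : s = t
    · subst hst
      rw [if_pos rfl]
      refine Finset.prod_congr (Finset.union_self s) fun j hj => ?_
      rw [if_pos]
      rw [Finset.mem_inter]
      exact ⟨hj, hj⟩
    · rw [if_neg hst]
      obtain ⟨j0, hj0u, hj0n⟩ : ∃ j0 ∈ s ∪ t, j0 ∉ s ∩ t := by
        by_contra h
        push_neg at h
        apply hst
        apply Finset.Subset.antisymm
        · intro a ha
          exact (Finset.mem_inter.mp (h a (Finset.mem_union_left _ ha))).2
        · intro a ha
          exact (Finset.mem_inter.mp (h a (Finset.mem_union_right _ ha))).1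
      exact Finset.prod_eq_zero hj0u (if_neg hj0n)

private lemma sum_choose_le_exp (b d : ℕ) (hb : 1 ≤ b) (hbd : b ≤ d) :
    (∑ k ∈ Finset.range (b+1), (d.choose k : ℝ)) ≤ (Real.exp 1 * d / b) ^ b := by
  have hd1 : (1:ℝ) ≤ (d:ℕ) := by exact_mod_cast le_trans hb hbd
  have hd0 : (0:ℝ) < d := lt_of_lt_of_le one_pos hd1
  have hb0 : (0:ℝ) < b := by exact_mod_cast hb
  set r : ℝ := (b:ℝ) / d with hr
  have hr0 : 0 < r := div_pos hb0 hd0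
  have hr1 : r ≤ 1 := by
    rw [hr, div_le_one hd0]
    exact_mod_cast hbd
  have hA : (∑ k ∈ Finset.range (b+1), (d.choose k : ℝ)) * r ^ b
      ≤ ∑ k ∈ Finset.range (b+1), (d.choose k : ℝ) * r ^ k := by
    rw [Finset.sum_mul]
    refine Finset.sum_le_sum fun k hk => ?_
    have hkb : k ≤ b := Nat.lt_succ_iff.mp (Finset.mem_range.mp hk)
    exact mul_le_mul_of_nonneg_left (pow_le_pow_of_le_one hr0.le hr1 hkb) (Nat.cast_nonneg _)
  have hB : (∑ k ∈ Finset.range (b+1), (d.choose k : ℝ) * r ^ k)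
      ≤ ∑ k ∈ Finset.range (d+1), (d.choose k : ℝ) * r ^ k := by
    refine Finset.sum_le_sum_of_subset_of_nonneg
      (Finset.range_subset_range.mpr (by omega)) fun k _ _ => ?_
    positivity
  have hC : (∑ k ∈ Finset.range (d+1), (d.choose k : ℝ) * r ^ k) = (1 + r) ^ d := by
    rw [add_comm (1:ℝ) r, add_pow]
    refine Finset.sum_congr rfl fun k hk => ?_
    rw [one_pow]
    ring
  have hD : (1 + r) ^ d ≤ Real.exp r ^ d := by
    refine pow_le_pow_left₀ (by positivity) ?_ d
    rw [add_comm]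
    exact Real.add_one_le_exp r
  have hE : Real.exp r ^ d = Real.exp 1 ^ b := by
    rw [← Real.exp_nat_mul, ← Real.exp_nat_mul]
    congr 1
    rw [hr]
    field_simp
  have hchain : (∑ k ∈ Finset.range (b+1), (d.choose k : ℝ)) * r ^ b ≤ Real.exp 1 ^ b := by
    calc (∑ k ∈ Finset.range (b+1), (d.choose k : ℝ)) * r ^ b
        ≤ ∑ k ∈ Finset.range (b+1), (d.choose k : ℝ) * r ^ k := hA
      _ ≤ ∑ k ∈ Finset.range (d+1), (d.choose k : ℝ) * r ^ k := hB
      _ = (1 + r) ^ d := hC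
      _ ≤ Real.exp r ^ d := hD
      _ = Real.exp 1 ^ b := hE
  have hrb : (0:ℝ) < r ^ b := pow_pos hr0 b
  rw [show Real.exp 1 * d / b = Real.exp 1 / r from by rw [hr]; field_simp]
  rw [div_pow, le_div_iff₀ hrb]
  exact hchain

end Aux

/-- `E[ω_i] = 0`, `E[ω_i²] = ∑_(S∈S_i^β) g(S)² ∏_(j∈S) 1/(p_j(1-p_j))`, and
`4 ≤ E[ω_i²] ≤ (e d_in/(β p(1-p)))^β`. -/
theorem statement_2 (β dX : ℕ) (hβ : 1 ≤ β) (p : ℝ) (hp : 0 < p) (hp' : p ≤ 1 / 2)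
    (St : SNIPE.Setting β dX p)
    (din : ℕ) (hdin : ∀ i, (St.Nb i).card ≤ din) (hβdin : β ≤ din)
    (i : Fin St.n) :
    St.E (St.w i) = 0 ∧
    St.E (fun x => St.w i x ^ 2) =
      ∑ s ∈ SNIPE.Sb St.n β St.Nb i,
        SNIPE.gcoef St.prob s ^ 2 * ∏ j ∈ s, (St.prob j * (1 - St.prob j))⁻¹ ∧
    4 ≤ St.E (fun x => St.w i x ^ 2) ∧
    St.E (fun x => St.w i x ^ 2) ≤
      (Real.exp 1 * din / (β * (p * (1 - p)))) ^ β := by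
    classical
  haveI := St.isProb
  have hprobm := St.prob_mem
  have hcpos : ∀ j : Fin St.n, 0 < St.prob j * (1 - St.prob j) := by
    intro j
    obtain ⟨h1, h2⟩ := hprobm j
    nlinarith
  have hppos : 0 < p * (1 - p) := by nlinarith
  have hcge : ∀ j : Fin St.n, p * (1 - p) ≤ St.prob j * (1 - St.prob j) := by
    intro j
    obtain ⟨h1, h2⟩ := hprobm j
    nlinarith
  -- Part 1
  have hE1 : St.E (St.w i) = 0 := by
    simp only [SNIPE.Setting.E, SNIPE.Setting.w, SNIPE.wt]
    have hint : ∀ s : Finset (Fin St.n), MeasureTheory.Integrable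
        (fun x => SNIPE.gcoef St.prob s *
          ∏ j ∈ s, (St.Z j x - St.prob j) / (St.prob j * (1 - St.prob j))) St.μ := by
      intro s
      have h := (pair_integral hp hp' St s ∅).1
      simp only [Finset.prod_empty, mul_one] at h
      exact h.const_mul _
    rw [MeasureTheory.integral_finset_sum _ fun s _ => hint s]
    refine Finset.sum_eq_zero fun s hs => ?_
    rw [MeasureTheory.integral_const_mul _ _]
    have h := (pair_integral hp hp' St s ∅).2
    simp only [Finset.prod_empty, mul_one] at h
    rw [h]
    rcases eq_or_ne s ∅ with rfl | hne
    · simp [SNIPE.gcoef]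
    · rw [if_neg hne, mul_zero]
  -- Part 2
  have hE2 : St.E (fun x => St.w i x ^ 2) =
      ∑ s ∈ SNIPE.Sb St.n β St.Nb i,
        SNIPE.gcoef St.prob s ^ 2 * ∏ j ∈ s, (St.prob j * (1 - St.prob j))⁻¹ := by
    simp only [SNIPE.Setting.E, SNIPE.Setting.w, SNIPE.wt]
    have hsq : ∀ x : St.Ω,
        (∑ s ∈ SNIPE.Sb St.n β St.Nb i, SNIPE.gcoef St.prob s *
          ∏ j ∈ s, (St.Z j x - St.prob j) / (St.prob j * (1 - St.prob j))) ^ 2 =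
        ∑ s ∈ SNIPE.Sb St.n β St.Nb i, ∑ t ∈ SNIPE.Sb St.n β St.Nb i,
          (SNIPE.gcoef St.prob s * SNIPE.gcoef St.prob t) *
            ((∏ j ∈ s, (St.Z j x - St.prob j) / (St.prob j * (1 - St.prob j))) *
             ∏ j ∈ t, (St.Z j x - St.prob j) / (St.prob j * (1 - St.prob j))) := by
      intro x
      rw [sq, Finset.sum_mul_sum]
      exact Finset.sum_congr rfl fun s _ => Finset.sum_congr rfl fun t _ => by ring
    rw [MeasureTheory.integral_congr_ae (Filter.Eventually.of_forall hsq)]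
    rw [MeasureTheory.integral_finset_sum _ fun s _ =>
      MeasureTheory.integrable_finset_sum _ fun t _ =>
        ((pair_integral hp hp' St s t).1.const_mul _)]
    refine Finset.sum_congr rfl fun s hs => ?_
    rw [MeasureTheory.integral_finset_sum _ fun t _ =>
      ((pair_integral hp hp' St s t).1.const_mul _)]
    rw [Finset.sum_congr rfl fun t (_ : t ∈ SNIPE.Sb St.n β St.Nb i) => by
      rw [MeasureTheory.integral_const_mul _ _, (pair_integral hp hp' St s t).2]]
    rw [Finset.sum_eq_single s
      (fun t _ htne => by rw [if_neg fun h => htne h.symm, mul_zero])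
      (fun h => absurd hs h)]
    rw [if_pos rfl]
    ring
  refine ⟨hE1, hE2, ?_, ?_⟩
  -- Part 3: lower bound
  · have hmemi : ({i} : Finset (Fin St.n)) ∈ SNIPE.Sb St.n β St.Nb i := by
      rw [SNIPE.Sb, Finset.mem_filter, Finset.mem_powerset]
      exact ⟨Finset.singleton_subset_iff.mpr (St.self_mem i), by simpa using hβ⟩
    have hpos : ∀ s ∈ SNIPE.Sb St.n β St.Nb i,
        0 ≤ SNIPE.gcoef St.prob s ^ 2 * ∏ j ∈ s, (St.prob j * (1 - St.prob j))⁻¹ :=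
      fun s _ => mul_nonneg (sq_nonneg _)
        (Finset.prod_nonneg fun j _ => inv_nonneg.mpr (hcpos j).le)
    have hterm : (4:ℝ) ≤ SNIPE.gcoef St.prob {i} ^ 2 *
        ∏ j ∈ ({i} : Finset (Fin St.n)), (St.prob j * (1 - St.prob j))⁻¹ := by
      have hg : SNIPE.gcoef St.prob {i} = 1 := by
        rw [SNIPE.gcoef, Finset.prod_singleton, Finset.prod_singleton]
        ring
      rw [hg, one_pow, one_mul, Finset.prod_singleton]
      have h1 : St.prob i * (1 - St.prob i) ≤ 1/4 := by nlinarith [sq_nonneg (St.prob i - 1/2)]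
      calc (4:ℝ) = ((1:ℝ)/4)⁻¹ := by norm_num
        _ ≤ (St.prob i * (1 - St.prob i))⁻¹ := inv_anti₀ (hcpos i) h1
    rw [hE2]
    exact le_trans hterm (Finset.single_le_sum hpos hmemi)
  -- Part 4: upper bound
  · have hgle : ∀ s ∈ SNIPE.Sb St.n β St.Nb i, SNIPE.gcoef St.prob s ^ 2 ≤ 1 := by
      intro s _
      rcases Finset.eq_empty_or_nonempty s with rfl | ⟨j0, hj0⟩
      · simp [SNIPE.gcoef]
      · have hmem01 : ∀ j : Fin St.n, 0 ≤ St.prob j ∧ St.prob j ≤ 1 := by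
          intro j
          obtain ⟨h1, h2⟩ := hprobm j
          constructor <;> nlinarith
        have h1 : ∏ j ∈ s, (1 - St.prob j) ≤ 1 - St.prob j0 := by
          rw [← Finset.mul_prod_erase s _ hj0]
          refine mul_le_of_le_one_right (by nlinarith [(hmem01 j0).2]) ?_
          refine Finset.prod_le_one (fun j _ => by nlinarith [(hmem01 j).2])
            (fun j _ => by nlinarith [(hmem01 j).1])
        have h2 : ∏ j ∈ s, St.prob j ≤ St.prob j0 := by
          rw [← Finset.mul_prod_erase s _ hj0]
          refine mul_le_of_le_one_right (hmem01 j0).1 ?_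
          exact Finset.prod_le_one (fun j _ => (hmem01 j).1) (fun j _ => (hmem01 j).2)
        have h3 : |SNIPE.gcoef St.prob s| ≤ 1 := by
          rw [SNIPE.gcoef]
          calc |(∏ j ∈ s, (1 - St.prob j)) - ∏ j ∈ s, (-St.prob j)|
              ≤ |∏ j ∈ s, (1 - St.prob j)| + |∏ j ∈ s, (-St.prob j)| := abs_sub _ _
            _ = (∏ j ∈ s, (1 - St.prob j)) + ∏ j ∈ s, St.prob j := by
                rw [abs_of_nonneg (Finset.prod_nonneg fun j _ => by nlinarith [(hmem01 j).2]),
                  Finset.abs_prod]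
                congr 1
                exact Finset.prod_congr rfl fun j _ => by
                  rw [abs_neg, abs_of_nonneg (hmem01 j).1]
            _ ≤ (1 - St.prob j0) + St.prob j0 := add_le_add h1 h2
            _ = 1 := by ring
        nlinarith [sq_abs (SNIPE.gcoef St.prob s), abs_nonneg (SNIPE.gcoef St.prob s)]
    have ha0 : (0:ℝ) ≤ (p * (1 - p))⁻¹ := inv_nonneg.mpr hppos.le
    have ha1 : (1:ℝ) ≤ (p * (1 - p))⁻¹ := by
      have hle1 : p * (1 - p) ≤ 1 := by nlinarith
      calc (1:ℝ) = (1:ℝ)⁻¹ := by norm_num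
        _ ≤ (p * (1 - p))⁻¹ := inv_anti₀ hppos hle1
    have hstep1 : (∑ s ∈ SNIPE.Sb St.n β St.Nb i,
        SNIPE.gcoef St.prob s ^ 2 * ∏ j ∈ s, (St.prob j * (1 - St.prob j))⁻¹)
        ≤ ∑ s ∈ SNIPE.Sb St.n β St.Nb i, ((p * (1 - p))⁻¹) ^ s.card := by
      refine Finset.sum_le_sum fun s hs => ?_
      have h4 : ∏ j ∈ s, (St.prob j * (1 - St.prob j))⁻¹ ≤ ((p * (1 - p))⁻¹) ^ s.card := by
        rw [← Finset.prod_const]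
        exact Finset.prod_le_prod (fun j _ => inv_nonneg.mpr (hcpos j).le)
          (fun j _ => inv_anti₀ hppos (hcge j))
      calc SNIPE.gcoef St.prob s ^ 2 * ∏ j ∈ s, (St.prob j * (1 - St.prob j))⁻¹
          ≤ 1 * ((p * (1 - p))⁻¹) ^ s.card :=
            mul_le_mul (hgle s hs) h4
              (Finset.prod_nonneg fun j _ => inv_nonneg.mpr (hcpos j).le) zero_le_one
        _ = ((p * (1 - p))⁻¹) ^ s.card := one_mul _
    have hbi : SNIPE.Sb St.n β St.Nb i
        = (Finset.range (β+1)).biUnion (fun k => (St.Nb i).powersetCard k) := by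
      ext s
      simp only [SNIPE.Sb, Finset.mem_filter, Finset.mem_powerset, Finset.mem_biUnion,
        Finset.mem_range, Finset.mem_powersetCard, Nat.lt_succ_iff]
      constructor
      · rintro ⟨h1, h2⟩
        exact ⟨s.card, h2, h1, rfl⟩
      · rintro ⟨k, hk, h1, rfl⟩
        exact ⟨h1, hk⟩
    have hdisj : (↑(Finset.range (β+1)) : Set ℕ).PairwiseDisjoint
        (fun k => (St.Nb i).powersetCard k) := by
      intro k _ l _ hkl
      simp only [Function.onFun]
      rw [Finset.disjoint_left]
      intro s hs hs'
      rw [Finset.mem_powersetCard] at hs hs'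
      exact hkl (hs.2 ▸ hs'.2)
    have hstep2 : (∑ s ∈ SNIPE.Sb St.n β St.Nb i, ((p * (1 - p))⁻¹) ^ s.card)
        = ∑ k ∈ Finset.range (β+1),
            (((St.Nb i).card.choose k : ℝ)) * ((p * (1 - p))⁻¹) ^ k := by
      rw [hbi, Finset.sum_biUnion hdisj]
      refine Finset.sum_congr rfl fun k hk => ?_
      rw [Finset.sum_congr rfl fun s hs => by
        rw [(Finset.mem_powersetCard.mp hs).2]]
      rw [Finset.sum_const, Finset.card_powersetCard, nsmul_eq_mul]
    have hstep3 : (∑ k ∈ Finset.range (β+1),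
          (((St.Nb i).card.choose k : ℝ)) * ((p * (1 - p))⁻¹) ^ k)
        ≤ ∑ k ∈ Finset.range (β+1), ((din.choose k : ℝ)) * ((p * (1 - p))⁻¹) ^ β := by
      refine Finset.sum_le_sum fun k hk => ?_
      have hc1 : (((St.Nb i).card.choose k : ℝ)) ≤ (din.choose k : ℝ) := by
        exact_mod_cast Nat.choose_le_choose k (hdin i)
      have hak : ((p * (1 - p))⁻¹) ^ k ≤ ((p * (1 - p))⁻¹) ^ β :=
        pow_le_pow_right₀ ha1 (Nat.lt_succ_iff.mp (Finset.mem_range.mp hk))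
      exact mul_le_mul hc1 hak (pow_nonneg ha0 k) (Nat.cast_nonneg _)
    have hstep4 : (∑ k ∈ Finset.range (β+1), ((din.choose k : ℝ)) * ((p * (1 - p))⁻¹) ^ β)
        ≤ (Real.exp 1 * din / β) ^ β * ((p * (1 - p))⁻¹) ^ β := by
      rw [← Finset.sum_mul]
      exact mul_le_mul_of_nonneg_right (sum_choose_le_exp β din hβ hβdin) (pow_nonneg ha0 β)
    have heq : (Real.exp 1 * din / β) ^ β * ((p * (1 - p))⁻¹) ^ β
        = (Real.exp 1 * din / (β * (p * (1 - p)))) ^ β := by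
      rw [← mul_pow]
      congr 1
      have hβ0 : (β:ℝ) ≠ 0 := by
        have : (0:ℝ) < β := by exact_mod_cast hβ
        exact ne_of_gt this
      field_simp
    rw [hE2]
    calc (∑ s ∈ SNIPE.Sb St.n β St.Nb i,
          SNIPE.gcoef St.prob s ^ 2 * ∏ j ∈ s, (St.prob j * (1 - St.prob j))⁻¹)
        ≤ ∑ s ∈ SNIPE.Sb St.n β St.Nb i, ((p * (1 - p))⁻¹) ^ s.card := hstep1
      _ = ∑ k ∈ Finset.range (β+1),
            (((St.Nb i).card.choose k : ℝ)) * ((p * (1 - p))⁻¹) ^ k := hstep2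
      _ ≤ ∑ k ∈ Finset.range (β+1), ((din.choose k : ℝ)) * ((p * (1 - p))⁻¹) ^ β := hstep3
      _ ≤ (Real.exp 1 * din / β) ^ β * ((p * (1 - p))⁻¹) ^ β := hstep4
      _ = (Real.exp 1 * din / (β * (p * (1 - p)))) ^ β := heq
end
end

section
/- For any fixed θ ∈ R^{d_X}, the covariate-adjusted SNIPE estimator is unbiased, E[TTÊ(θ)] = TTE, and its variance satisfies Var(TTÊ(θ)) ≤ (4 d_in d_out (Y_max + ‖θ‖₂ X_max)² / n) · ((e d_in / β) · max{4β², 1/(p(1−p))})^β. -/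
noncomputable section

open MeasureTheory ProbabilityTheory Filter Finset Topology SNIPE

namespace SNIPEAux
open MeasureTheory ProbabilityTheory Finset SNIPE

variable {β dX : ℕ} {p : ℝ}

/-- bounded measurable -/
def BddM {Ω : Type} [MeasurableSpace Ω] (f : Ω → ℝ) : Prop :=
  Measurable f ∧ ∃ C, ∀ x, |f x| ≤ C

namespace BddM

variable {Ω : Type} [MeasurableSpace Ω] {f g : Ω → ℝ}

lemma const (c : ℝ) : BddM (fun _ : Ω => c) :=
  ⟨measurable_const, |c|, fun _ => le_rfl⟩

lemma add (hf : BddM f) (hg : BddM g) : BddM (fun x => f x + g x) := by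
  obtain ⟨hfm, Cf, hCf⟩ := hf; obtain ⟨hgm, Cg, hCg⟩ := hg
  exact ⟨hfm.add hgm, Cf + Cg, fun x =>
    (abs_add_le _ _).trans (add_le_add (hCf x) (hCg x))⟩

lemma mul (hf : BddM f) (hg : BddM g) : BddM (fun x => f x * g x) := by
  obtain ⟨hfm, Cf, hCf⟩ := hf; obtain ⟨hgm, Cg, hCg⟩ := hg
  refine ⟨hfm.mul hgm, Cf * Cg, fun x => ?_⟩
  rw [abs_mul]
  exact mul_le_mul (hCf x) (hCg x) (abs_nonneg _) ((abs_nonneg _).trans (hCf x))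

lemma sum {ι : Type*} (s : Finset ι) (F : ι → Ω → ℝ) (h : ∀ i ∈ s, BddM (F i)) :
    BddM (fun x => ∑ i ∈ s, F i x) := by
  classical
  have hmeas : Measurable fun x => ∑ i ∈ s, F i x :=
    Finset.measurable_sum s fun i hi => (h i hi).1
  choose C hC using fun i : s => (h i i.2).2
  refine ⟨hmeas, ∑ i ∈ s.attach, C i, fun x => ?_⟩
  show |∑ i ∈ s, F i x| ≤ _
  rw [← Finset.sum_attach s fun i => F i x]
  exact (Finset.abs_sum_le_sum_abs _ _).trans
    (Finset.sum_le_sum fun i _ => hC i x)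

lemma prod {ι : Type*} (s : Finset ι) (F : ι → Ω → ℝ) (h : ∀ i ∈ s, BddM (F i)) :
    BddM (fun x => ∏ i ∈ s, F i x) := by
  classical
  have hmeas : Measurable fun x => ∏ i ∈ s, F i x :=
    Finset.measurable_prod s fun i hi => (h i hi).1
  choose C hC using fun i : s => (h i i.2).2
  refine ⟨hmeas, ∏ i ∈ s.attach, C i, fun x => ?_⟩
  show |∏ i ∈ s, F i x| ≤ _
  rw [← Finset.prod_attach s fun i => F i x, Finset.abs_prod]
  exact Finset.prod_le_prod (fun _ _ => abs_nonneg _) fun i _ => hC i x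

lemma integrable {μ : Measure Ω} [IsFiniteMeasure μ] (hf : BddM f) : Integrable f μ := by
  obtain ⟨hfm, C, hC⟩ := hf
  exact (integrable_const C).mono' hfm.aestronglyMeasurable
    (Filter.Eventually.of_forall fun x => by simpa using hC x)

end BddM

variable (St : SNIPE.Setting β dX p)

lemma BM_Z (j : Fin St.n) : BddM (St.Z j) := by
  refine ⟨St.Z_meas j, 1, fun x => ?_⟩
  rcases St.Z_range j x with h | h <;> simp [h]

lemma BM_lin (a b : Fin St.n → ℝ) (U : Finset (Fin St.n)) :
    BddM (fun x => ∏ j ∈ U, (a j + b j * St.Z j x)) :=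
  BddM.prod U _ fun j _ => (BddM.const (a j)).add ((BddM.const (b j)).mul (BM_Z St j))

lemma integral_Z (hp : 0 < p) (j : Fin St.n) : ∫ x, St.Z j x ∂St.μ = St.prob j := by
  haveI := St.isProb
  have h0 : 0 ≤ St.prob j := le_trans hp.le (St.prob_mem j).1
  have hZ : St.Z j = (St.Z j ⁻¹' {1}).indicator (fun _ => (1:ℝ)) := by
    funext x
    rcases St.Z_range j x with h | h <;>
      simp [Set.indicator_apply, Set.mem_preimage, h]
  rw [hZ, integral_indicator_const _ ((St.Z_meas j) (measurableSet_singleton 1)),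
    measureReal_def, St.Z_prob j, ENNReal.toReal_ofReal h0, smul_eq_mul, mul_one]

lemma integral_lin (hp : 0 < p) (a b : Fin St.n → ℝ) (j : Fin St.n) :
    ∫ x, (a j + b j * St.Z j x) ∂St.μ = a j + b j * St.prob j := by
  haveI := St.isProb
  rw [integral_add (integrable_const _) (((BddM.const (b j)).mul (BM_Z St j)).integrable),
    integral_const, measureReal_def, measure_univ, ENNReal.toReal_one, one_smul,
    integral_const_mul, integral_Z St hp j]

lemma integral_prod_lin (hp : 0 < p) (a b : Fin St.n → ℝ) (U : Finset (Fin St.n)) :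
    ∫ x, ∏ j ∈ U, (a j + b j * St.Z j x) ∂St.μ = ∏ j ∈ U, (a j + b j * St.prob j) := by
  haveI := St.isProb
  classical
  induction U using Finset.induction_on with
  | empty => simp
  | @insert i s hi ih =>
    have hg : ∀ j : Fin St.n, Measurable (fun x => a j + b j * St.Z j x) :=
      fun j => measurable_const.add (measurable_const.mul (St.Z_meas j))
    have hindep : IndepFun (fun x => ∏ j ∈ s, (a j + b j * St.Z j x))
        (fun x => a i + b i * St.Z i x) St.μ := by
      have hcomp : iIndepFun
          (fun j x => a j + b j * St.Z j x) St.μ :=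
        St.Z_indep.comp (fun j z => a j + b j * z)
          (fun j => measurable_const.add (measurable_const.mul measurable_id))
      have h2 := hcomp.indepFun_finsetProd_of_notMem hg hi
      have hfun : (∏ j ∈ s, fun x => a j + b j * St.Z j x)
          = fun x => ∏ j ∈ s, (a j + b j * St.Z j x) := by
        funext x; exact Finset.prod_apply x s _
      rwa [hfun] at h2
    have hint1 : Integrable (fun x => ∏ j ∈ s, (a j + b j * St.Z j x)) St.μ :=
      (BM_lin St a b s).integrable
    have hint2 : Integrable (fun x => a i + b i * St.Z i x) St.μ :=
      ((BddM.const (a i)).add ((BddM.const (b i)).mul (BM_Z St i))).integrable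
    have hmul := hindep.symm.integral_mul_eq_mul_integral hint2.aestronglyMeasurable hint1.aestronglyMeasurable
    simp only [Pi.mul_apply] at hmul
    calc ∫ x, ∏ j ∈ insert i s, (a j + b j * St.Z j x) ∂St.μ
        = ∫ x, (a i + b i * St.Z i x) * ∏ j ∈ s, (a j + b j * St.Z j x) ∂St.μ := by
          simp only [Finset.prod_insert hi]
      _ = (∫ x, (a i + b i * St.Z i x) ∂St.μ) * ∫ x, ∏ j ∈ s, (a j + b j * St.Z j x) ∂St.μ :=
          hmul
      _ = ∏ j ∈ insert i s, (a j + b j * St.prob j) := by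
          rw [ih, Finset.prod_insert hi, integral_lin St hp]

end SNIPEAux
namespace SNIPEAux
open MeasureTheory ProbabilityTheory Finset SNIPE

variable {β dX : ℕ} {p : ℝ} (St : SNIPE.Setting β dX p)

def cc (j : Fin St.n) : ℝ := St.prob j * (1 - St.prob j)

lemma prob_pos (hp : 0 < p) (j : Fin St.n) : 0 < St.prob j :=
  lt_of_lt_of_le hp (St.prob_mem j).1

lemma prob_lt_one (hp : 0 < p) (j : Fin St.n) : St.prob j < 1 :=
  lt_of_le_of_lt (St.prob_mem j).2 (by linarith)

lemma cc_pos (hp : 0 < p) (j : Fin St.n) : 0 < cc St j :=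
  mul_pos (prob_pos St hp j) (by linarith [prob_lt_one St hp j])

def mono (s t : Finset (Fin St.n)) (x : St.Ω) : ℝ :=
  (∏ j ∈ s, (St.Z j x - St.prob j) / cc St j) * ∏ j ∈ t, St.Z j x

lemma BM_e (j : Fin St.n) : BddM (fun x => (St.Z j x - St.prob j) / cc St j) := by
  have h := ((BM_Z St j).add (BddM.const (-St.prob j))).mul (BddM.const (cc St j)⁻¹)
  simpa [sub_eq_add_neg, div_eq_mul_inv] using h

lemma BM_mono (s t : Finset (Fin St.n)) : BddM (mono St s t) := by
  have h := (BddM.prod s _ fun j _ => BM_e St j).mul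
    (BddM.prod t _ fun j _ => BM_Z St j)
  exact h

/-- generic merging of two products over overlapping index sets -/
lemma prod_merge {γ : Type*} [DecidableEq γ] (s t : Finset γ) (f g h : γ → ℝ)
    (hfg : ∀ j ∈ s ∩ t, f j * g j = h j) :
    (∏ j ∈ s, f j) * ∏ j ∈ t, g j
      = ∏ j ∈ s ∪ t, (if j ∈ s then (if j ∈ t then h j else f j) else g j) := by
  have e2 : (s \ t) ∪ (s ∩ t) = s := Finset.sdiff_union_inter s t
  have e3 : (t \ s) ∪ (s ∩ t) = t := by
    rw [Finset.inter_comm]; exact Finset.sdiff_union_inter t s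
  have d2 : Disjoint (s \ t) (s ∩ t) :=
    Finset.sdiff_disjoint.mono_right Finset.inter_subset_right
  have d3 : Disjoint (t \ s) (s ∩ t) :=
    Finset.sdiff_disjoint.mono_right Finset.inter_subset_left
  have hU : s ∪ t = ((s \ t) ∪ (s ∩ t)) ∪ (t \ s) := by
    rw [e2]; exact (Finset.union_sdiff_self_eq_union).symm
  have dU : Disjoint ((s \ t) ∪ (s ∩ t)) (t \ s) := by
    rw [e2]; exact Finset.disjoint_sdiff
  have hL : (∏ j ∈ s, f j) * ∏ j ∈ t, g j
      = ((∏ j ∈ s \ t, f j) * ∏ j ∈ s ∩ t, f j) *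
        ((∏ j ∈ t \ s, g j) * ∏ j ∈ s ∩ t, g j) := by
    rw [← Finset.prod_union d2, ← Finset.prod_union d3, e2, e3]
  have hR : ∏ j ∈ s ∪ t, (if j ∈ s then (if j ∈ t then h j else f j) else g j)
      = ((∏ j ∈ s \ t, f j) * ∏ j ∈ s ∩ t, h j) * ∏ j ∈ t \ s, g j := by
    rw [hU, Finset.prod_union dU, Finset.prod_union d2]
    congr 1
    · congr 1
      · refine Finset.prod_congr rfl fun j hj => ?_
        rw [Finset.mem_sdiff] at hj
        simp [hj.1, hj.2]
      · refine Finset.prod_congr rfl fun j hj => ?_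
        rw [Finset.mem_inter] at hj
        simp [hj.1, hj.2]
    · refine Finset.prod_congr rfl fun j hj => ?_
      rw [Finset.mem_sdiff] at hj
      simp [hj.2]
  have hh : ∏ j ∈ s ∩ t, h j = (∏ j ∈ s ∩ t, f j) * ∏ j ∈ s ∩ t, g j := by
    rw [← Finset.prod_mul_distrib]
    exact (Finset.prod_congr rfl hfg).symm
  rw [hL, hR, hh]; ring

end SNIPEAux
namespace SNIPEAux
open MeasureTheory ProbabilityTheory Finset SNIPE

variable {β dX : ℕ} {p : ℝ} (St : SNIPE.Setting β dX p)

def Aco (s t : Finset (Fin St.n)) (j : Fin St.n) : ℝ :=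
  if j ∈ s then (if j ∈ t then 0 else -St.prob j / cc St j) else 0

def Bco (s t : Finset (Fin St.n)) (j : Fin St.n) : ℝ :=
  if j ∈ s then (if j ∈ t then (1 - St.prob j) / cc St j else 1 / cc St j) else 1

lemma mono_eq_lin (s t : Finset (Fin St.n)) (x : St.Ω) :
    mono St s t x = ∏ j ∈ s ∪ t, (Aco St s t j + Bco St s t j * St.Z j x) := by
  classical
  rw [mono, prod_merge s t (fun j => (St.Z j x - St.prob j) / cc St j)
    (fun j => St.Z j x) (fun j => (1 - St.prob j) / cc St j * St.Z j x)
    (fun j _ => by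
      rcases St.Z_range j x with h | h <;> simp only [h] <;> ring)]
  refine Finset.prod_congr rfl fun j hj => ?_
  by_cases h1 : j ∈ s <;> by_cases h2 : j ∈ t <;>
    simp only [Aco, Bco, h1, h2, if_true, if_false] <;> ring

lemma integral_mono (hp : 0 < p) (s t : Finset (Fin St.n)) :
    ∫ x, mono St s t x ∂St.μ = if s ⊆ t then ∏ j ∈ t \ s, St.prob j else 0 := by
  classical
  have hrep : (fun x => mono St s t x)
      = fun x => ∏ j ∈ s ∪ t, (Aco St s t j + Bco St s t j * St.Z j x) :=
    funext (mono_eq_lin St s t)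
  rw [hrep, integral_prod_lin St hp]
  have hval : ∀ j, (Aco St s t j + Bco St s t j * St.prob j)
      = if j ∈ s then (if j ∈ t then 1 else 0) else St.prob j := by
    intro j
    have h0 := (prob_pos St hp j).ne'
    have h1' : (1:ℝ) - St.prob j ≠ 0 := ne_of_gt (by linarith [prob_lt_one St hp j])
    by_cases h1 : j ∈ s <;> by_cases h2 : j ∈ t <;>
      simp only [Aco, Bco, h1, h2, if_true, if_false]
    · rw [cc]; field_simp; ring
    · field_simp; ring
    · ring
    · ring
  by_cases hst : s ⊆ t
  · rw [if_pos hst]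
    have hU : s ∪ t = t := Finset.union_eq_right.mpr hst
    rw [hU, ← Finset.prod_sdiff hst]
    have h1 : ∏ j ∈ t \ s, (Aco St s t j + Bco St s t j * St.prob j)
        = ∏ j ∈ t \ s, St.prob j := by
      refine Finset.prod_congr rfl fun j hj => ?_
      rw [Finset.mem_sdiff] at hj
      rw [hval j, if_neg hj.2]
    have h2 : ∏ j ∈ s, (Aco St s t j + Bco St s t j * St.prob j) = 1 := by
      refine Finset.prod_eq_one fun j hj => ?_
      rw [hval j, if_pos hj, if_pos (hst hj)]
    rw [h1, h2, mul_one]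
  · rw [if_neg hst]
    obtain ⟨j, hjs, hjt⟩ := Finset.not_subset.mp hst
    refine Finset.prod_eq_zero (Finset.mem_union_left t hjs) ?_
    rw [hval j, if_pos hjs, if_neg hjt]

end SNIPEAux
namespace SNIPEAux
open MeasureTheory ProbabilityTheory Finset SNIPE

variable {β dX : ℕ} {p : ℝ} (St : SNIPE.Setting β dX p)

def A2 (s s' : Finset (Fin St.n)) (j : Fin St.n) : ℝ :=
  if j ∈ s ∩ s' then St.prob j ^ 2 / (cc St j) ^ 2 else -St.prob j / cc St j

def B2 (s s' : Finset (Fin St.n)) (j : Fin St.n) : ℝ :=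
  if j ∈ s ∩ s' then (1 - 2 * St.prob j) / (cc St j) ^ 2 else 1 / cc St j

lemma integral_mono_sq (hp : 0 < p) (s s' : Finset (Fin St.n)) :
    ∫ x, mono St s ∅ x * mono St s' ∅ x ∂St.μ
      = if s = s' then ∏ j ∈ s, (cc St j)⁻¹ else 0 := by
  classical
  have hrep : (fun x => mono St s ∅ x * mono St s' ∅ x)
      = fun x => ∏ j ∈ s ∪ s', (A2 St s s' j + B2 St s s' j * St.Z j x) := by
    funext x
    have h0 : mono St s ∅ x * mono St s' ∅ x
        = (∏ j ∈ s, (St.Z j x - St.prob j) / cc St j) *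
          ∏ j ∈ s', (St.Z j x - St.prob j) / cc St j := by
      rw [mono, mono]; simp
    rw [h0, prod_merge s s' _ _
      (fun j => ((1 - 2 * St.prob j) * St.Z j x + St.prob j ^ 2) / (cc St j) ^ 2)
      (fun j _ => by
        rcases St.Z_range j x with h | h <;> simp only [h] <;> ring)]
    refine Finset.prod_congr rfl fun j hj => ?_
    by_cases h1 : j ∈ s <;> by_cases h2 : j ∈ s' <;>
      simp only [A2, B2, Finset.mem_inter, h1, h2, true_and, and_true, and_false,
        if_true, if_false] <;> ring
  rw [hrep, integral_prod_lin St hp]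
  have hval : ∀ j, (A2 St s s' j + B2 St s s' j * St.prob j)
      = if j ∈ s ∩ s' then (cc St j)⁻¹ else 0 := by
    intro j
    have h0 := (prob_pos St hp j).ne'
    have h1' : (1:ℝ) - St.prob j ≠ 0 := ne_of_gt (by linarith [prob_lt_one St hp j])
    by_cases h : j ∈ s ∩ s' <;> simp only [A2, B2, h, if_true, if_false]
    · rw [cc]; field_simp; ring
    · ring
  by_cases hss : s = s'
  · subst hss
    rw [if_pos rfl, Finset.union_self]
    refine Finset.prod_congr rfl fun j hj => ?_
    rw [hval j, if_pos (by simpa using hj)]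
  · rw [if_neg hss]
    have hor : ¬ (s ⊆ s') ∨ ¬ (s' ⊆ s) := by
      by_contra h; push_neg at h; exact hss (Finset.Subset.antisymm h.1 h.2)
    obtain ⟨j, hj1, hj2⟩ : ∃ j, j ∈ s ∪ s' ∧ j ∉ s ∩ s' := by
      rcases hor with h | h
      · obtain ⟨j, hj, hj2⟩ := Finset.not_subset.mp h
        exact ⟨j, Finset.mem_union_left _ hj, by simp [Finset.mem_inter, hj2]⟩
      · obtain ⟨j, hj, hj2⟩ := Finset.not_subset.mp h
        exact ⟨j, Finset.mem_union_right _ hj, by simp [Finset.mem_inter, hj2]⟩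
    refine Finset.prod_eq_zero hj1 ?_
    rw [hval j, if_neg hj2]

def Mco (a1 a2 : Fin St.n → ℝ) (U : Finset (Fin St.n)) (j : Fin St.n) : ℝ :=
  if j ∈ U then a1 j else a2 j

lemma integral_mono_mul_disjoint (hp : 0 < p) {s t s' t' : Finset (Fin St.n)}
    (hd : Disjoint (s ∪ t) (s' ∪ t')) :
    ∫ x, mono St s t x * mono St s' t' x ∂St.μ
      = (∫ x, mono St s t x ∂St.μ) * ∫ x, mono St s' t' x ∂St.μ := by
  classical
  set a := Mco St (Aco St s t) (Aco St s' t') (s ∪ t) with ha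
  set b := Mco St (Bco St s t) (Bco St s' t') (s ∪ t) with hb
  have hU : (fun x => mono St s t x) = fun x => ∏ j ∈ s ∪ t, (a j + b j * St.Z j x) := by
    funext x
    rw [mono_eq_lin]
    exact Finset.prod_congr rfl fun j hj => by simp [ha, hb, Mco, hj]
  have hU' : (fun x => mono St s' t' x)
      = fun x => ∏ j ∈ s' ∪ t', (a j + b j * St.Z j x) := by
    funext x
    rw [mono_eq_lin]
    refine Finset.prod_congr rfl fun j hj => ?_
    have hnot : j ∉ s ∪ t := Finset.disjoint_right.mp hd hj
    simp [ha, hb, Mco, hnot]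
  have h1 : (fun x => mono St s t x * mono St s' t' x)
      = fun x => ∏ j ∈ (s ∪ t) ∪ (s' ∪ t'), (a j + b j * St.Z j x) := by
    funext x
    rw [Finset.prod_union hd, ← congrFun hU x, ← congrFun hU' x]
  rw [h1, integral_prod_lin St hp, hU, hU', integral_prod_lin St hp,
    integral_prod_lin St hp, ← Finset.prod_union hd]

end SNIPEAux
namespace SNIPEAux
open MeasureTheory ProbabilityTheory Finset SNIPE

variable {β dX : ℕ} {p : ℝ} (St : SNIPE.Setting β dX p)

def th (θ : Fin dX → ℝ) (i : Fin St.n) : ℝ := ∑ k, θ k * St.X i k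

def γc (θ : Fin dX → ℝ) (i : Fin St.n) (s t : Finset (Fin St.n)) : ℝ :=
  gcoef St.prob s * (St.α i t - if t = ∅ then th St θ i else 0)

lemma mem_Sb_subset {i : Fin St.n} {s : Finset (Fin St.n)}
    (hs : s ∈ Sb St.n β St.Nb i) : s ⊆ St.Nb i :=
  Finset.mem_powerset.mp (Finset.mem_filter.mp hs).1

lemma empty_mem_Sb (i : Fin St.n) : ∅ ∈ Sb St.n β St.Nb i :=
  Finset.mem_filter.mpr ⟨Finset.mem_powerset.mpr (Finset.empty_subset _), by simp⟩

lemma filter_subset_Sb {i : Fin St.n} {t : Finset (Fin St.n)}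
    (ht : t ∈ Sb St.n β St.Nb i) :
    (Sb St.n β St.Nb i).filter (fun s => s ⊆ t) = t.powerset := by
  obtain ⟨ht1, ht2⟩ := Finset.mem_filter.mp ht
  ext s
  rw [Finset.mem_filter, Finset.mem_powerset]
  constructor
  · rintro ⟨_, h⟩; exact h
  · intro h
    refine ⟨Finset.mem_filter.mpr ⟨Finset.mem_powerset.mpr
      (h.trans (Finset.mem_powerset.mp ht1)), le_trans (Finset.card_le_card h) ht2⟩, h⟩

lemma prod_zero_ite {γ : Type*} [DecidableEq γ] (t : Finset γ) :
    (∏ _j ∈ t, (0:ℝ)) = if t = ∅ then 1 else 0 := by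
  classical
  rcases t.eq_empty_or_nonempty with h | h
  · simp [h]
  · rw [if_neg h.ne_empty]
    obtain ⟨j, hj⟩ := h
    exact Finset.prod_eq_zero hj rfl

lemma w_eq (i : Fin St.n) (x : St.Ω) :
    St.w i x = ∑ s ∈ Sb St.n β St.Nb i, gcoef St.prob s * mono St s ∅ x := by
  rw [Setting.w, wt]
  exact Finset.sum_congr rfl fun s hs => by simp [mono, cc]

lemma Wrep (θ : Fin dX → ℝ) (i : Fin St.n) (x : St.Ω) :
    St.w i x * (St.Yo i x - th St θ i)
      = ∑ s ∈ Sb St.n β St.Nb i, ∑ t ∈ Sb St.n β St.Nb i,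
          γc St θ i s t * mono St s t x := by
  classical
  have hw : St.w i x = ∑ s ∈ Sb St.n β St.Nb i,
      gcoef St.prob s * ∏ j ∈ s, (St.Z j x - St.prob j) / cc St j := by
    rw [w_eq]
    exact Finset.sum_congr rfl fun s hs => by rw [mono]; simp
  have hth : th St θ i = ∑ t ∈ Sb St.n β St.Nb i,
      (if t = ∅ then th St θ i else 0) * ∏ j ∈ t, St.Z j x := by
    rw [Finset.sum_eq_single_of_mem ∅ (empty_mem_Sb St i)
      (fun b _ hne => by rw [if_neg hne, zero_mul])]
    rw [if_pos rfl, Finset.prod_empty, mul_one]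
  have hy : St.Yo i x - th St θ i = ∑ t ∈ Sb St.n β St.Nb i,
      (St.α i t - if t = ∅ then th St θ i else 0) * ∏ j ∈ t, St.Z j x := by
    simp only [sub_mul, Finset.sum_sub_distrib]
    rw [← hth, Setting.Yo, Ypot]
  rw [hw, hy, Finset.sum_mul_sum]
  exact Finset.sum_congr rfl fun s hs => Finset.sum_congr rfl fun t ht => by
    rw [γc, mono]; ring

lemma BM_w (i : Fin St.n) : BddM (St.w i) := by
  have h : BddM (fun x => ∑ s ∈ Sb St.n β St.Nb i, gcoef St.prob s * mono St s ∅ x) :=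
    BddM.sum _ _ fun s _ => (BddM.const _).mul (BM_mono St s ∅)
  obtain ⟨h1, C, h2⟩ := h
  refine ⟨?_, C, fun x => ?_⟩
  · have : St.w i = fun x => ∑ s ∈ Sb St.n β St.Nb i, gcoef St.prob s * mono St s ∅ x :=
      funext (w_eq St i)
    rw [this]; exact h1
  · rw [w_eq St i]; exact h2 x

lemma gsum {i : Fin St.n} {t : Finset (Fin St.n)} (ht : t ∈ Sb St.n β St.Nb i) :
    ∑ s ∈ Sb St.n β St.Nb i, gcoef St.prob s *
        (if s ⊆ t then ∏ j ∈ t \ s, St.prob j else 0)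
      = 1 - (if t = ∅ then 1 else 0) := by
  classical
  simp only [mul_ite, mul_zero]
  rw [← Finset.sum_filter, filter_subset_Sb St ht]
  have h1 : ∑ s ∈ t.powerset, gcoef St.prob s * ∏ j ∈ t \ s, St.prob j
      = (∑ s ∈ t.powerset, (∏ j ∈ s, (1 - St.prob j)) * ∏ j ∈ t \ s, St.prob j)
        - ∑ s ∈ t.powerset, (∏ j ∈ s, (-St.prob j)) * ∏ j ∈ t \ s, St.prob j := by
    rw [← Finset.sum_sub_distrib]
    exact Finset.sum_congr rfl fun s _ => by rw [gcoef, sub_mul]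
  rw [h1, ← Finset.prod_add (fun j => 1 - St.prob j) St.prob t,
    ← Finset.prod_add (fun j => -St.prob j) St.prob t]
  have h2 : ∏ j ∈ t, (1 - St.prob j + St.prob j) = 1 :=
    Finset.prod_eq_one fun j _ => by ring
  have h3 : ∏ j ∈ t, (-St.prob j + St.prob j) = if t = ∅ then 1 else 0 := by
    rw [← prod_zero_ite t]
    exact Finset.prod_congr rfl fun j _ => by ring
  rw [h2, h3]

lemma integral_Wf (hp : 0 < p) (θ : Fin dX → ℝ) (i : Fin St.n) :
    ∫ x, St.w i x * (St.Yo i x - th St θ i) ∂St.μ = St.Y1 i - St.Y0 i := by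
  classical
  haveI := St.isProb
  have hrep : (fun x => St.w i x * (St.Yo i x - th St θ i))
      = fun x => ∑ s ∈ Sb St.n β St.Nb i, ∑ t ∈ Sb St.n β St.Nb i,
          γc St θ i s t * mono St s t x := funext (Wrep St θ i)
  rw [hrep]
  rw [integral_finset_sum _ fun s _ => (BddM.sum _ _
    fun t _ => (BddM.const _).mul (BM_mono St s t)).integrable]
  have hin : ∀ s ∈ Sb St.n β St.Nb i,
      ∫ x, (∑ t ∈ Sb St.n β St.Nb i, γc St θ i s t * mono St s t x) ∂St.μ
        = ∑ t ∈ Sb St.n β St.Nb i, γc St θ i s t *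
            (if s ⊆ t then ∏ j ∈ t \ s, St.prob j else 0) := by
    intro s _
    rw [integral_finset_sum _ fun t _ => ((BddM.const _).mul (BM_mono St s t)).integrable]
    exact Finset.sum_congr rfl fun t _ => by
      rw [integral_const_mul, integral_mono St hp]
  rw [Finset.sum_congr rfl hin, Finset.sum_comm]
  have hout : ∀ t ∈ Sb St.n β St.Nb i,
      ∑ s ∈ Sb St.n β St.Nb i, γc St θ i s t *
          (if s ⊆ t then ∏ j ∈ t \ s, St.prob j else 0)
        = (St.α i t - if t = ∅ then th St θ i else 0) * (1 - if t = ∅ then 1 else 0) := by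
    intro t ht
    rw [← gsum St ht, Finset.mul_sum]
    exact Finset.sum_congr rfl fun s _ => by rw [γc]; ring
  rw [Finset.sum_congr rfl hout]
  have hY1 : St.Y1 i = ∑ t ∈ Sb St.n β St.Nb i, St.α i t := by
    rw [Setting.Y1, Ypot]; simp
  have hY0 : St.Y0 i = ∑ t ∈ Sb St.n β St.Nb i,
      St.α i t * (if t = ∅ then 1 else 0) := by
    rw [Setting.Y0, Ypot]
    exact Finset.sum_congr rfl fun t _ => by rw [prod_zero_ite]
  rw [hY1, hY0, ← Finset.sum_sub_distrib]
  exact Finset.sum_congr rfl fun t _ => by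
    by_cases h : t = ∅ <;> simp [h] <;> ring

lemma integral_w_sq (hp : 0 < p) (i : Fin St.n) :
    ∫ x, (St.w i x) ^ 2 ∂St.μ
      = ∑ s ∈ Sb St.n β St.Nb i, gcoef St.prob s ^ 2 * ∏ j ∈ s, (cc St j)⁻¹ := by
  classical
  haveI := St.isProb
  have hrep : (fun x => (St.w i x) ^ 2)
      = fun x => ∑ s ∈ Sb St.n β St.Nb i, ∑ s' ∈ Sb St.n β St.Nb i,
          (gcoef St.prob s * gcoef St.prob s') * (mono St s ∅ x * mono St s' ∅ x) := by
    funext x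
    rw [pow_two, w_eq St i, Finset.sum_mul_sum]
    exact Finset.sum_congr rfl fun s _ => Finset.sum_congr rfl fun s' _ => by ring
  rw [hrep]
  rw [integral_finset_sum _ fun s _ => (BddM.sum _ _
    fun s' _ => (BddM.const _).mul ((BM_mono St s ∅).mul (BM_mono St s' ∅))).integrable]
  refine Finset.sum_congr rfl fun s hs => ?_
  rw [integral_finset_sum _ fun s' _ =>
    ((BddM.const _).mul ((BM_mono St s ∅).mul (BM_mono St s' ∅))).integrable]
  have : ∀ s' ∈ Sb St.n β St.Nb i,
      ∫ x, (gcoef St.prob s * gcoef St.prob s') * (mono St s ∅ x * mono St s' ∅ x) ∂St.μ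
        = (gcoef St.prob s * gcoef St.prob s') * (if s = s' then ∏ j ∈ s, (cc St j)⁻¹ else 0) := by
    intro s' _
    rw [integral_const_mul, integral_mono_sq St hp]
  rw [Finset.sum_congr rfl this, Finset.sum_eq_single_of_mem s hs
    (fun b _ hne => by rw [if_neg (Ne.symm hne), mul_zero])]
  rw [if_pos rfl]; ring

lemma sum_mul_sum_4 {ι : Type*} (S1 S2 S3 S4 : Finset ι) (f g : ι → ι → ℝ) :
    (∑ s ∈ S1, ∑ t ∈ S2, f s t) * (∑ s' ∈ S3, ∑ t' ∈ S4, g s' t')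
      = ∑ s ∈ S1, ∑ t ∈ S2, ∑ s' ∈ S3, ∑ t' ∈ S4, f s t * g s' t' := by
  rw [Finset.sum_mul_sum]
  refine Finset.sum_congr rfl fun s _ => ?_
  have h : ∀ s' ∈ S3, (∑ t ∈ S2, f s t) * (∑ t' ∈ S4, g s' t')
      = ∑ t ∈ S2, ∑ t' ∈ S4, f s t * g s' t' := fun s' _ => Finset.sum_mul_sum _ _ _ _
  rw [Finset.sum_congr rfl h]
  exact Finset.sum_comm

lemma integral_Wf_mul (hp : 0 < p) (θ : Fin dX → ℝ) {i i' : Fin St.n}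
    (hd : Disjoint (St.Nb i) (St.Nb i')) :
    ∫ x, (St.w i x * (St.Yo i x - th St θ i)) * (St.w i' x * (St.Yo i' x - th St θ i')) ∂St.μ
      = (∫ x, St.w i x * (St.Yo i x - th St θ i) ∂St.μ)
        * ∫ x, St.w i' x * (St.Yo i' x - th St θ i') ∂St.μ := by
  classical
  haveI := St.isProb
  have hdst : ∀ s t : Finset (Fin St.n), s ∈ Sb St.n β St.Nb i → t ∈ Sb St.n β St.Nb i →
      ∀ s' t' : Finset (Fin St.n), s' ∈ Sb St.n β St.Nb i' → t' ∈ Sb St.n β St.Nb i' →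
      Disjoint (s ∪ t) (s' ∪ t') := by
    intro s t hs ht s' t' hs' ht'
    refine Disjoint.mono ?_ ?_ hd
    · exact Finset.union_subset (mem_Sb_subset St hs) (mem_Sb_subset St ht)
    · exact Finset.union_subset (mem_Sb_subset St hs') (mem_Sb_subset St ht')
  have hrep : (fun x => (St.w i x * (St.Yo i x - th St θ i))
        * (St.w i' x * (St.Yo i' x - th St θ i')))
      = fun x => ∑ s ∈ Sb St.n β St.Nb i, ∑ t ∈ Sb St.n β St.Nb i,
          ∑ s' ∈ Sb St.n β St.Nb i', ∑ t' ∈ Sb St.n β St.Nb i',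
            (γc St θ i s t * γc St θ i' s' t') * (mono St s t x * mono St s' t' x) := by
    funext x
    rw [Wrep St θ i, Wrep St θ i', sum_mul_sum_4]
    refine Finset.sum_congr rfl fun s _ => Finset.sum_congr rfl fun t _ =>
      Finset.sum_congr rfl fun s' _ => Finset.sum_congr rfl fun t' _ => by ring
  rw [hrep]
  rw [integral_finset_sum _ fun s _ => (BddM.sum _ _ fun t _ => BddM.sum _ _ fun s' _ =>
    BddM.sum _ _ fun t' _ => (BddM.const _).mul
      ((BM_mono St s t).mul (BM_mono St s' t'))).integrable]
  have hstep : ∀ s ∈ Sb St.n β St.Nb i,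
      ∫ x, (∑ t ∈ Sb St.n β St.Nb i, ∑ s' ∈ Sb St.n β St.Nb i', ∑ t' ∈ Sb St.n β St.Nb i',
          (γc St θ i s t * γc St θ i' s' t') * (mono St s t x * mono St s' t' x)) ∂St.μ
        = ∑ t ∈ Sb St.n β St.Nb i, ∑ s' ∈ Sb St.n β St.Nb i', ∑ t' ∈ Sb St.n β St.Nb i',
            (γc St θ i s t * γc St θ i' s' t') *
              ((∫ x, mono St s t x ∂St.μ) * ∫ x, mono St s' t' x ∂St.μ) := by
    intro s hs
    rw [integral_finset_sum _ fun t _ => (BddM.sum _ _ fun s' _ =>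
      BddM.sum _ _ fun t' _ => (BddM.const _).mul
        ((BM_mono St s t).mul (BM_mono St s' t'))).integrable]
    refine Finset.sum_congr rfl fun t ht => ?_
    rw [integral_finset_sum _ fun s' _ => (BddM.sum _ _ fun t' _ => (BddM.const _).mul
        ((BM_mono St s t).mul (BM_mono St s' t'))).integrable]
    refine Finset.sum_congr rfl fun s' hs' => ?_
    rw [integral_finset_sum _ fun t' _ => ((BddM.const _).mul
        ((BM_mono St s t).mul (BM_mono St s' t'))).integrable]
    refine Finset.sum_congr rfl fun t' ht' => ?_
    rw [integral_const_mul, integral_mono_mul_disjoint St hp (hdst s t hs ht s' t' hs' ht')]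
  rw [Finset.sum_congr rfl hstep]
  have hWi : ∫ x, St.w i x * (St.Yo i x - th St θ i) ∂St.μ
      = ∑ s ∈ Sb St.n β St.Nb i, ∑ t ∈ Sb St.n β St.Nb i,
          γc St θ i s t * ∫ x, mono St s t x ∂St.μ := by
    rw [funext (Wrep St θ i), integral_finset_sum _ fun s _ => (BddM.sum _ _
      fun t _ => (BddM.const _).mul (BM_mono St s t)).integrable]
    refine Finset.sum_congr rfl fun s _ => ?_
    rw [integral_finset_sum _ fun t _ => ((BddM.const _).mul (BM_mono St s t)).integrable]
    exact Finset.sum_congr rfl fun t _ => integral_const_mul _ _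
  have hWi' : ∫ x, St.w i' x * (St.Yo i' x - th St θ i') ∂St.μ
      = ∑ s' ∈ Sb St.n β St.Nb i', ∑ t' ∈ Sb St.n β St.Nb i',
          γc St θ i' s' t' * ∫ x, mono St s' t' x ∂St.μ := by
    rw [funext (Wrep St θ i'), integral_finset_sum _ fun s _ => (BddM.sum _ _
      fun t _ => (BddM.const _).mul (BM_mono St s t)).integrable]
    refine Finset.sum_congr rfl fun s _ => ?_
    rw [integral_finset_sum _ fun t _ => ((BddM.const _).mul (BM_mono St s t)).integrable]
    exact Finset.sum_congr rfl fun t _ => integral_const_mul _ _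
  rw [hWi, hWi', sum_mul_sum_4]
  refine Finset.sum_congr rfl fun s _ => Finset.sum_congr rfl fun t _ =>
    Finset.sum_congr rfl fun s' _ => Finset.sum_congr rfl fun t' _ => by ring

end SNIPEAux
namespace SNIPEAux
open MeasureTheory ProbabilityTheory Finset SNIPE

variable {Ω : Type} [MeasurableSpace Ω] {μ : Measure Ω} [IsProbabilityMeasure μ]

lemma BddM.sub {f g : Ω → ℝ} (hf : BddM f) (hg : BddM g) : BddM (fun x => f x - g x) := by
  have h := hf.add (((BddM.const (-1)).mul hg))
  simpa [sub_eq_add_neg, neg_one_mul] using h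

lemma center_integral (u v : Ω → ℝ) (hu : BddM u) (hv : BddM v) :
    ∫ x, (u x - ∫ y, u y ∂μ) * (v x - ∫ y, v y ∂μ) ∂μ
      = (∫ x, u x * v x ∂μ) - (∫ x, u x ∂μ) * ∫ x, v x ∂μ := by
  have b1 : BddM (fun x => u x * v x - (∫ y, u y ∂μ) * v x) :=
    (hu.mul hv).sub ((BddM.const _).mul hv)
  have b2 : BddM (fun x => u x * v x - (∫ y, u y ∂μ) * v x - (∫ y, v y ∂μ) * u x) :=
    b1.sub ((BddM.const _).mul hu)
  have hrw : (fun x => (u x - ∫ y, u y ∂μ) * (v x - ∫ y, v y ∂μ))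
      = fun x => (u x * v x - (∫ y, u y ∂μ) * v x - (∫ y, v y ∂μ) * u x)
          + (∫ y, u y ∂μ) * ∫ y, v y ∂μ := by
    funext x; ring
  rw [hrw, integral_add b2.integrable (integrable_const _),
    integral_sub b1.integrable ((BddM.const _).mul hu).integrable,
    integral_sub (hu.mul hv).integrable ((BddM.const _).mul hv).integrable,
    integral_const_mul, integral_const_mul, integral_const, measureReal_def, measure_univ,
    ENNReal.toReal_one, one_smul]
  ring

lemma cov_abs_le (f g : Ω → ℝ) (hf : BddM f) (hg : BddM g) :
    |(∫ x, f x * g x ∂μ) - (∫ x, f x ∂μ) * ∫ x, g x ∂μ|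
      ≤ ((∫ x, f x * f x ∂μ) - (∫ x, f x ∂μ) ^ 2) / 2
        + ((∫ x, g x * g x ∂μ) - (∫ x, g x ∂μ) ^ 2) / 2 := by
  have hF : BddM (fun x => f x - ∫ y, f y ∂μ) := hf.sub (BddM.const _)
  have hG : BddM (fun x => g x - ∫ y, g y ∂μ) := hg.sub (BddM.const _)
  have hFG := center_integral (μ := μ) f g hf hg
  have hFF := center_integral (μ := μ) f f hf hf
  have hGG := center_integral (μ := μ) g g hg hg
  have key : ∀ ε : ℝ, ε = 1 ∨ ε = -1 →
      0 ≤ (∫ x, (f x - ∫ y, f y ∂μ) * (f x - ∫ y, f y ∂μ) ∂μ)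
        + (2 * ε) * (∫ x, (f x - ∫ y, f y ∂μ) * (g x - ∫ y, g y ∂μ) ∂μ)
        + ∫ x, (g x - ∫ y, g y ∂μ) * (g x - ∫ y, g y ∂μ) ∂μ := by
    intro ε hε
    have h0 : 0 ≤ ∫ x, ((f x - ∫ y, f y ∂μ) + ε * (g x - ∫ y, g y ∂μ)) ^ 2 ∂μ :=
      integral_nonneg fun x => sq_nonneg _
    have hrw : (fun x => ((f x - ∫ y, f y ∂μ) + ε * (g x - ∫ y, g y ∂μ)) ^ 2)
        = fun x => ((f x - ∫ y, f y ∂μ) * (f x - ∫ y, f y ∂μ)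
            + (2 * ε) * ((f x - ∫ y, f y ∂μ) * (g x - ∫ y, g y ∂μ)))
            + (ε * ε) * ((g x - ∫ y, g y ∂μ) * (g x - ∫ y, g y ∂μ)) := by
      funext x; ring
    rw [hrw, integral_add (((hF.mul hF).add ((BddM.const _).mul (hF.mul hG))).integrable)
        (((BddM.const _).mul (hG.mul hG)).integrable),
      integral_add ((hF.mul hF).integrable) (((BddM.const _).mul (hF.mul hG)).integrable),
      integral_const_mul, integral_const_mul] at h0
    rcases hε with h | h <;> subst h <;> nlinarith [h0]
  have k1 := key 1 (Or.inl rfl)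
  have k2 := key (-1) (Or.inr rfl)
  rw [hFG, hFF, hGG] at k1 k2
  rw [abs_le]
  constructor <;> [nlinarith [k1]; nlinarith [k2]]

end SNIPEAux
namespace SNIPEAux
open Finset

lemma sum_range_choose_mul_pow_eq (d m : ℕ) (hm : d ≤ m) (y : ℝ) :
    ∑ k ∈ Finset.range (m + 1), (d.choose k : ℝ) * y ^ k = (y + 1) ^ d := by
  rw [add_pow]
  rw [← Finset.sum_subset (Finset.range_subset_range.mpr (Nat.succ_le_succ hm))
    (fun k _ hk => ?_)]
  · exact Finset.sum_congr rfl fun k _ => by rw [one_pow]; ring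
  · rw [Finset.mem_range, Nat.lt_succ_iff, not_le] at hk
    rw [Nat.choose_eq_zero_of_lt hk]
    simp

lemma binom_bound (β d : ℕ) (hβ : 1 ≤ β) (hd : 1 ≤ d) (r : ℝ) (hr : 4 ≤ r) :
    ∑ k ∈ Finset.range (β + 1), (d.choose k : ℝ) * r ^ k
      ≤ (Real.exp 1 * d / β * max (4 * (β : ℝ) ^ 2) r) ^ β := by
  have hβR : (1 : ℝ) ≤ (β : ℝ) := by exact_mod_cast hβ
  have hdR : (1 : ℝ) ≤ (d : ℝ) := by exact_mod_cast hd
  have hβ0 : (0 : ℝ) < (β : ℝ) := by linarith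
  have hd0 : (0 : ℝ) < (d : ℝ) := by linarith
  have hr0 : (0 : ℝ) < r := by linarith
  set M : ℝ := max (4 * (β : ℝ) ^ 2) r with hM
  have hMr : r ≤ M := le_max_right _ _
  have hMβ : 4 * (β : ℝ) ^ 2 ≤ M := le_max_left _ _
  have hM0 : (0 : ℝ) < M := lt_of_lt_of_le hr0 hMr
  have he0 : (0 : ℝ) < Real.exp 1 := Real.exp_pos 1
  have step : ∀ l : ℝ, 0 < l → l ≤ 1 →
      ∑ k ∈ Finset.range (β + 1), (d.choose k : ℝ) * r ^ k
        ≤ (l⁻¹) ^ β * (l * r + 1) ^ d := by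
    intro l hl0 hl1
    have hinv : (1 : ℝ) ≤ l⁻¹ := (one_le_inv₀ hl0).2 hl1
    have t1 : ∀ k ∈ Finset.range (β + 1), (d.choose k : ℝ) * r ^ k
        ≤ (l⁻¹) ^ β * ((d.choose k : ℝ) * (l * r) ^ k) := by
      intro k hk
      rw [Finset.mem_range, Nat.lt_succ_iff] at hk
      have h1 : (d.choose k : ℝ) * r ^ k
          = (l⁻¹) ^ k * ((d.choose k : ℝ) * (l * r) ^ k) := by
        rw [mul_pow, inv_pow]
        have hlk : l ^ k ≠ 0 := pow_ne_zero _ hl0.ne'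
        field_simp
      rw [h1]
      have h2 : (l⁻¹) ^ k ≤ (l⁻¹) ^ β := pow_le_pow_right₀ hinv hk
      have h3 : (0 : ℝ) ≤ (d.choose k : ℝ) * (l * r) ^ k :=
        mul_nonneg (Nat.cast_nonneg _) (pow_nonneg (by positivity) _)
      exact mul_le_mul_of_nonneg_right h2 h3
    calc ∑ k ∈ Finset.range (β + 1), (d.choose k : ℝ) * r ^ k
        ≤ ∑ k ∈ Finset.range (β + 1), (l⁻¹) ^ β * ((d.choose k : ℝ) * (l * r) ^ k) :=
          Finset.sum_le_sum t1
      _ = (l⁻¹) ^ β * ∑ k ∈ Finset.range (β + 1), (d.choose k : ℝ) * (l * r) ^ k := by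
          rw [Finset.mul_sum]
      _ ≤ (l⁻¹) ^ β * ∑ k ∈ Finset.range (max β d + 1), (d.choose k : ℝ) * (l * r) ^ k := by
          refine mul_le_mul_of_nonneg_left ?_ (pow_nonneg (by positivity) _)
          refine Finset.sum_le_sum_of_subset_of_nonneg
            (Finset.range_subset_range.mpr (Nat.succ_le_succ (le_max_left _ _))) ?_
          intro k _ _
          exact mul_nonneg (Nat.cast_nonneg _) (pow_nonneg (by positivity) _)
      _ = (l⁻¹) ^ β * (l * r + 1) ^ d := by
          rw [sum_range_choose_mul_pow_eq d (max β d) (le_max_right _ _)]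
  have hexpβ : Real.exp (β : ℝ) = Real.exp 1 ^ β := by
    rw [← Real.exp_nat_mul, mul_one]
  by_cases hc : (β : ℝ) ≤ (d : ℝ) * r
  · set l : ℝ := (β : ℝ) / ((d : ℝ) * r) with hl
    have hl0 : 0 < l := by positivity
    have hl1 : l ≤ 1 := by
      rw [hl, div_le_one (by positivity)]; exact hc
    have hlr : l * r = (β : ℝ) / (d : ℝ) := by
      rw [hl]; field_simp
    have hlinv : l⁻¹ = (d : ℝ) * r / (β : ℝ) := by
      rw [hl]; field_simp
    have h1 := step l hl0 hl1
    rw [hlr, hlinv] at h1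
    have h2 : ((β : ℝ) / (d : ℝ) + 1) ^ d ≤ Real.exp 1 ^ β := by
      calc ((β : ℝ) / (d : ℝ) + 1) ^ d ≤ (Real.exp ((β : ℝ) / (d : ℝ))) ^ d :=
            pow_le_pow_left₀ (by positivity) (Real.add_one_le_exp _) d
        _ = Real.exp ((d : ℝ) * ((β : ℝ) / (d : ℝ))) := by rw [Real.exp_nat_mul]
        _ = Real.exp (β : ℝ) := by
            congr 1; field_simp
        _ = Real.exp 1 ^ β := hexpβ
    calc ∑ k ∈ Finset.range (β + 1), (d.choose k : ℝ) * r ^ k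
        ≤ ((d : ℝ) * r / (β : ℝ)) ^ β * ((β : ℝ) / (d : ℝ) + 1) ^ d := h1
      _ ≤ ((d : ℝ) * r / (β : ℝ)) ^ β * Real.exp 1 ^ β :=
          mul_le_mul_of_nonneg_left h2 (pow_nonneg (by positivity) _)
      _ = (Real.exp 1 * (d : ℝ) / (β : ℝ) * r) ^ β := by
          rw [← mul_pow]; congr 1; field_simp
      _ ≤ (Real.exp 1 * (d : ℝ) / (β : ℝ) * M) ^ β := by
          refine pow_le_pow_left₀ (by positivity) ?_ β
          exact mul_le_mul_of_nonneg_left hMr (by positivity)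
  · push_neg at hc
    have h1 := step 1 one_pos le_rfl
    rw [inv_one, one_pow, one_mul, one_mul] at h1
    have h2 : (r + 1) ^ d ≤ Real.exp 1 ^ β := by
      calc (r + 1) ^ d ≤ (Real.exp r) ^ d :=
            pow_le_pow_left₀ (by positivity) (Real.add_one_le_exp _) d
        _ = Real.exp ((d : ℝ) * r) := by rw [Real.exp_nat_mul]
        _ ≤ Real.exp (β : ℝ) := Real.exp_le_exp.mpr hc.le
        _ = Real.exp 1 ^ β := hexpβ
    have h3 : Real.exp 1 ≤ Real.exp 1 * (d : ℝ) / (β : ℝ) * M := by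
      have : Real.exp 1 * (d : ℝ) / (β : ℝ) * M = Real.exp 1 * ((d : ℝ) * M / (β : ℝ)) := by
        ring
      rw [this]
      refine le_mul_of_one_le_right he0.le ?_
      rw [le_div_iff₀ hβ0, one_mul]
      nlinarith
    calc ∑ k ∈ Finset.range (β + 1), (d.choose k : ℝ) * r ^ k
        ≤ (r + 1) ^ d := h1
      _ ≤ Real.exp 1 ^ β := h2
      _ ≤ (Real.exp 1 * (d : ℝ) / (β : ℝ) * M) ^ β := pow_le_pow_left₀ he0.le h3 β

end SNIPEAux
namespace SNIPEAux
open MeasureTheory ProbabilityTheory Finset SNIPE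

variable {β dX : ℕ} {p : ℝ} (St : SNIPE.Setting β dX p)

lemma Sb_eq_biUnion (i : Fin St.n) :
    Sb St.n β St.Nb i
      = (Finset.range (β + 1)).biUnion (fun k => Finset.powersetCard k (St.Nb i)) := by
  ext s
  simp only [Sb, Finset.mem_filter, Finset.mem_powerset, Finset.mem_biUnion,
    Finset.mem_range, Finset.mem_powersetCard, Nat.lt_succ_iff]
  exact ⟨fun ⟨h1, h2⟩ => ⟨s.card, h2, h1, rfl⟩,
    fun ⟨k, hk, h1, h2⟩ => ⟨h1, h2 ▸ hk⟩⟩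

lemma Sb_sum_pow_le (i : Fin St.n) (din : ℕ) (hdin : (St.Nb i).card ≤ din)
    (r : ℝ) (hr : 0 ≤ r) :
    ∑ s ∈ Sb St.n β St.Nb i, r ^ s.card
      ≤ ∑ k ∈ Finset.range (β + 1), (din.choose k : ℝ) * r ^ k := by
  classical
  rw [Sb_eq_biUnion]
  rw [Finset.sum_biUnion (fun k _ k' _ hne => Finset.disjoint_left.mpr
    fun s hs hs' => hne (by
      rw [← (Finset.mem_powersetCard.mp hs).2, ← (Finset.mem_powersetCard.mp hs').2]))]
  refine Finset.sum_le_sum fun k _ => ?_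
  have h1 : ∑ s ∈ Finset.powersetCard k (St.Nb i), r ^ s.card
      = ((St.Nb i).card.choose k : ℝ) * r ^ k := by
    rw [Finset.sum_congr rfl (fun s hs => by
      rw [(Finset.mem_powersetCard.mp hs).2]), Finset.sum_const,
      Finset.card_powersetCard, nsmul_eq_mul]
  rw [h1]
  exact mul_le_mul_of_nonneg_right
    (by exact_mod_cast Nat.choose_le_choose k hdin) (pow_nonneg hr k)

lemma nbrs_card_le (i : Fin St.n) (dout : ℕ)
    (hdout : ∀ j, (Finset.univ.filter fun i' => j ∈ St.Nb i').card ≤ dout) :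
    (St.nbrs i).card ≤ (St.Nb i).card * dout := by
  classical
  have hsub : St.nbrs i ⊆ (St.Nb i).biUnion
      (fun j => Finset.univ.filter fun i' => j ∈ St.Nb i') := by
    intro i' hi'
    obtain ⟨j, hj⟩ := (Finset.mem_filter.mp hi').2
    rw [Finset.mem_inter] at hj
    exact Finset.mem_biUnion.mpr ⟨j, hj.1,
      Finset.mem_filter.mpr ⟨Finset.mem_univ _, hj.2⟩⟩
  calc (St.nbrs i).card ≤ _ := Finset.card_le_card hsub
    _ ≤ ∑ j ∈ St.Nb i, (Finset.univ.filter fun i' => j ∈ St.Nb i').card :=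
        Finset.card_biUnion_le
    _ ≤ ∑ _j ∈ St.Nb i, dout := Finset.sum_le_sum fun j _ => hdout j
    _ = (St.Nb i).card * dout := by rw [Finset.sum_const, smul_eq_mul]

lemma w_sq_le (hp : 0 < p) (hp' : p ≤ 1 / 2) (hβ : 1 ≤ β) (i : Fin St.n)
    (din : ℕ) (hdin : (St.Nb i).card ≤ din) (hdin1 : 1 ≤ din) :
    ∫ x, (St.w i x) ^ 2 ∂St.μ
      ≤ 4 * (Real.exp 1 * din / β * max (4 * (β : ℝ) ^ 2) (1 / (p * (1 - p)))) ^ β := by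
  classical
  have hpp : (0 : ℝ) < p * (1 - p) := mul_pos hp (by linarith)
  set r : ℝ := 1 / (p * (1 - p)) with hrdef
  have hr0 : (0 : ℝ) < r := by positivity
  have hr4 : (4 : ℝ) ≤ r := by
    rw [hrdef, le_div_iff₀ hpp]
    nlinarith
  have hterm : ∀ s ∈ Sb St.n β St.Nb i,
      gcoef St.prob s ^ 2 * ∏ j ∈ s, (cc St j)⁻¹ ≤ 4 * r ^ s.card := by
    intro s _
    have hg : |gcoef St.prob s| ≤ 2 := by
      rw [gcoef]
      refine (abs_sub _ _).trans ?_
      have h1 : |∏ j ∈ s, (1 - St.prob j)| ≤ 1 := by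
        rw [Finset.abs_prod]
        refine Finset.prod_le_one (fun j _ => abs_nonneg _) fun j _ => ?_
        have h := St.prob_mem j
        rw [abs_le]; constructor <;> nlinarith [hp.le]
      have h2 : |∏ j ∈ s, (-St.prob j)| ≤ 1 := by
        rw [Finset.abs_prod]
        refine Finset.prod_le_one (fun j _ => abs_nonneg _) fun j _ => ?_
        have h := St.prob_mem j
        rw [abs_le]; constructor <;> nlinarith [hp.le]
      linarith
    have hg2 : gcoef St.prob s ^ 2 ≤ 4 := by
      have := abs_nonneg (gcoef St.prob s)
      nlinarith [sq_abs (gcoef St.prob s)]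
    have hccr : ∀ j : Fin St.n, (cc St j)⁻¹ ≤ r := by
      intro j
      have h := St.prob_mem j
      have hle : p * (1 - p) ≤ cc St j := by
        rw [cc]; nlinarith
      rw [hrdef, one_div]
      exact inv_anti₀ hpp hle
    have hprod : ∏ j ∈ s, (cc St j)⁻¹ ≤ r ^ s.card := by
      rw [← Finset.prod_const]
      exact Finset.prod_le_prod (fun j _ => (inv_nonneg).mpr (cc_pos St hp j).le)
        fun j _ => hccr j
    have hprod0 : 0 ≤ ∏ j ∈ s, (cc St j)⁻¹ :=
      Finset.prod_nonneg fun j _ => (inv_nonneg).mpr (cc_pos St hp j).le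
    calc gcoef St.prob s ^ 2 * ∏ j ∈ s, (cc St j)⁻¹
        ≤ 4 * ∏ j ∈ s, (cc St j)⁻¹ := mul_le_mul_of_nonneg_right hg2 hprod0
      _ ≤ 4 * r ^ s.card := by
          exact mul_le_mul_of_nonneg_left hprod (by norm_num)
  calc ∫ x, (St.w i x) ^ 2 ∂St.μ
      = ∑ s ∈ Sb St.n β St.Nb i, gcoef St.prob s ^ 2 * ∏ j ∈ s, (cc St j)⁻¹ :=
        integral_w_sq St hp i
    _ ≤ ∑ s ∈ Sb St.n β St.Nb i, 4 * r ^ s.card := Finset.sum_le_sum hterm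
    _ = 4 * ∑ s ∈ Sb St.n β St.Nb i, r ^ s.card := by rw [Finset.mul_sum]
    _ ≤ 4 * ∑ k ∈ Finset.range (β + 1), (din.choose k : ℝ) * r ^ k := by
        refine mul_le_mul_of_nonneg_left
          (Sb_sum_pow_le St i din hdin r hr0.le) (by norm_num)
    _ ≤ 4 * (Real.exp 1 * din / β * max (4 * (β : ℝ) ^ 2) r) ^ β := by
        refine mul_le_mul_of_nonneg_left
          (binom_bound β din hβ hdin1 r hr4) (by norm_num)

end SNIPEAux
/-- unbiasedness and variance bound of the covariate-adjusted SNIPE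
estimator, Theorem 2: for any fixed `θ`, `E[TTÊ(θ)] = TTE` and
`Var(TTÊ(θ)) ≤ (4 d_in d_out (Y_max + ‖θ‖₂ X_max)²/n) ((e d_in/β) max(4β², 1/(p(1-p))))^β`. -/
theorem statement_3 (β dX : ℕ) (hβ : 1 ≤ β) (p : ℝ) (hp : 0 < p) (hp' : p ≤ 1 / 2)
    (St : SNIPE.Setting β dX p) (hn : 0 < St.n) (hXc : ∑ i, St.X i = 0)
    (din dout : ℕ)
    (hdin : ∀ i, (St.Nb i).card ≤ din)
    (hdout : ∀ j, (Finset.univ.filter fun i => j ∈ St.Nb i).card ≤ dout)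
    (Xmax Ymax : ℝ)
    (hXmax : ∀ i, (∑ k, |St.X i k|) ≤ Xmax)
    (hYmax : ∀ i, (∑ s ∈ SNIPE.Sb St.n β St.Nb i, |St.α i s|) ≤ Ymax)
    (θ : Fin dX → ℝ) :
    St.E (St.tteHat θ) = St.tte ∧
    variance (St.tteHat θ) St.μ ≤
      4 * din * dout * (Ymax + SNIPE.l2 θ * Xmax) ^ 2 / St.n *
        (Real.exp 1 * din / β * max (4 * (β : ℝ) ^ 2) (1 / (p * (1 - p)))) ^ β := by
  classical
  haveI := St.isProb
  have hi0 : Nonempty (Fin St.n) := ⟨⟨0, hn⟩⟩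
  obtain ⟨i0⟩ := hi0
  have hdin1 : 1 ≤ din :=
    le_trans (Finset.card_pos.mpr ⟨i0, St.self_mem i0⟩) (hdin i0)
  have hn0 : ((St.n : ℝ)) ≠ 0 := Nat.cast_ne_zero.mpr hn.ne'
  set A : ℝ := Ymax + SNIPE.l2 θ * Xmax with hAdef
  set Kb : ℝ := (Real.exp 1 * din / β * max (4 * (β : ℝ) ^ 2) (1 / (p * (1 - p)))) ^ β
    with hKdef
  -- bounded measurable weights
  have hBMW : ∀ i, SNIPEAux.BddM
      (fun x => St.w i x * (St.Yo i x - SNIPEAux.th St θ i)) := by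
    intro i
    have hYo : SNIPEAux.BddM (St.Yo i) := by
      have h : SNIPEAux.BddM (fun x => ∑ t ∈ SNIPE.Sb St.n β St.Nb i,
          St.α i t * ∏ j ∈ t, St.Z j x) :=
        SNIPEAux.BddM.sum _ _ fun t _ => (SNIPEAux.BddM.const _).mul
          (SNIPEAux.BddM.prod _ _ fun j _ => SNIPEAux.BM_Z St j)
      exact h
    exact (SNIPEAux.BM_w St i).mul (hYo.sub (SNIPEAux.BddM.const _))
  have hint : ∀ i : Fin St.n,
      MeasureTheory.Integrable (fun x => St.w i x * (St.Yo i x - SNIPEAux.th St θ i)) St.μ :=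
    fun i => (hBMW i).integrable
  have hThat : St.tteHat θ
      = fun x => (St.n : ℝ)⁻¹ * ∑ i, St.w i x * (St.Yo i x - SNIPEAux.th St θ i) := rfl
  have hEW : ∀ i, ∫ x, St.w i x * (St.Yo i x - SNIPEAux.th St θ i) ∂St.μ
      = St.Y1 i - St.Y0 i := fun i => SNIPEAux.integral_Wf St hp θ i
  have part1 : St.E (St.tteHat θ) = St.tte := by
    show ∫ x, St.tteHat θ x ∂St.μ = St.tte
    rw [hThat]
    rw [MeasureTheory.integral_const_mul,
      MeasureTheory.integral_finset_sum _ fun i _ => hint i,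
      Finset.sum_congr rfl fun i _ => hEW i]
    rfl
  refine ⟨part1, ?_⟩
  -- the pointwise bound A
  have hl20 : 0 ≤ SNIPE.l2 θ := Real.sqrt_nonneg _
  have hWA : ∀ (i : Fin St.n) x, |St.Yo i x - SNIPEAux.th St θ i| ≤ A := by
    intro i x
    have hY : |St.Yo i x| ≤ Ymax := by
      have hYo_eq : St.Yo i x
          = ∑ t ∈ SNIPE.Sb St.n β St.Nb i, St.α i t * ∏ j ∈ t, St.Z j x := rfl
      rw [hYo_eq]
      refine le_trans (Finset.abs_sum_le_sum_abs _ _) (le_trans ?_ (hYmax i))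
      refine Finset.sum_le_sum fun t _ => ?_
      rw [abs_mul]
      have hprod : |∏ j ∈ t, St.Z j x| ≤ 1 := by
        rw [Finset.abs_prod]
        refine Finset.prod_le_one (fun j _ => abs_nonneg _) fun j _ => ?_
        rcases St.Z_range j x with h | h <;> simp [h]
      calc |St.α i t| * |∏ j ∈ t, St.Z j x| ≤ |St.α i t| * 1 :=
            mul_le_mul_of_nonneg_left hprod (abs_nonneg _)
        _ = |St.α i t| := mul_one _
    have hth : |SNIPEAux.th St θ i| ≤ SNIPE.l2 θ * Xmax := by
      have hl2 : ∀ k, |θ k| ≤ SNIPE.l2 θ := by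
        intro k
        rw [SNIPE.l2, ← Real.sqrt_sq_eq_abs]
        exact Real.sqrt_le_sqrt (Finset.single_le_sum
          (fun k _ => sq_nonneg (θ k)) (Finset.mem_univ k))
      calc |SNIPEAux.th St θ i| ≤ ∑ k, |θ k * St.X i k| :=
            Finset.abs_sum_le_sum_abs _ _
        _ ≤ ∑ k, SNIPE.l2 θ * |St.X i k| := Finset.sum_le_sum fun k _ => by
            rw [abs_mul]
            exact mul_le_mul_of_nonneg_right (hl2 k) (abs_nonneg _)
        _ = SNIPE.l2 θ * ∑ k, |St.X i k| := by rw [Finset.mul_sum]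
        _ ≤ SNIPE.l2 θ * Xmax := mul_le_mul_of_nonneg_left (hXmax i) hl20
    calc |St.Yo i x - SNIPEAux.th St θ i| ≤ |St.Yo i x| + |SNIPEAux.th St θ i| :=
          abs_sub _ _
      _ ≤ A := by rw [hAdef]; linarith
  -- second moment bound per unit
  have hsig : ∀ i : Fin St.n,
      (∫ x, (St.w i x * (St.Yo i x - SNIPEAux.th St θ i))
          * (St.w i x * (St.Yo i x - SNIPEAux.th St θ i)) ∂St.μ)
        - (∫ x, St.w i x * (St.Yo i x - SNIPEAux.th St θ i) ∂St.μ) ^ 2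
      ≤ A ^ 2 * (4 * Kb) := by
    intro i
    have hBw2 : SNIPEAux.BddM (fun x => A ^ 2 * St.w i x ^ 2) := by
      have h := (SNIPEAux.BddM.const (A ^ 2)).mul
        ((SNIPEAux.BM_w St i).mul (SNIPEAux.BM_w St i))
      simpa [pow_two] using h
    have h1 : ∫ x, (St.w i x * (St.Yo i x - SNIPEAux.th St θ i))
          * (St.w i x * (St.Yo i x - SNIPEAux.th St θ i)) ∂St.μ
        ≤ ∫ x, A ^ 2 * St.w i x ^ 2 ∂St.μ := by
      refine MeasureTheory.integral_mono ((hBMW i).mul (hBMW i)).integrable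
        hBw2.integrable ?_
      intro x
      have he : (St.w i x * (St.Yo i x - SNIPEAux.th St θ i))
            * (St.w i x * (St.Yo i x - SNIPEAux.th St θ i))
          = St.w i x ^ 2 * (St.Yo i x - SNIPEAux.th St θ i) ^ 2 := by ring
      show (St.w i x * (St.Yo i x - SNIPEAux.th St θ i))
            * (St.w i x * (St.Yo i x - SNIPEAux.th St θ i)) ≤ A ^ 2 * St.w i x ^ 2
      rw [he]
      have h2 : (St.Yo i x - SNIPEAux.th St θ i) ^ 2 ≤ A ^ 2 := by
        rw [← sq_abs]
        exact pow_le_pow_left₀ (abs_nonneg _) (hWA i x) 2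
      nlinarith [sq_nonneg (St.w i x)]
    have h3 := SNIPEAux.w_sq_le St hp hp' hβ i din (hdin i) hdin1
    rw [← hKdef] at h3
    have h4 : 0 ≤ (∫ x, St.w i x * (St.Yo i x - SNIPEAux.th St θ i) ∂St.μ) ^ 2 :=
      sq_nonneg _
    have h5 : ∫ x, A ^ 2 * St.w i x ^ 2 ∂St.μ = A ^ 2 * ∫ x, St.w i x ^ 2 ∂St.μ :=
      MeasureTheory.integral_const_mul _ _
    nlinarith [mul_le_mul_of_nonneg_left h3 (sq_nonneg A)]
  -- covariance bounds
  have hcov_le : ∀ i i' : Fin St.n,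
      (∫ x, (St.w i x * (St.Yo i x - SNIPEAux.th St θ i))
          * (St.w i' x * (St.Yo i' x - SNIPEAux.th St θ i')) ∂St.μ)
        - (∫ x, St.w i x * (St.Yo i x - SNIPEAux.th St θ i) ∂St.μ)
          * (∫ x, St.w i' x * (St.Yo i' x - SNIPEAux.th St θ i') ∂St.μ)
      ≤ A ^ 2 * (4 * Kb) := by
    intro i i'
    have habs := SNIPEAux.cov_abs_le (μ := St.μ) _ _ (hBMW i) (hBMW i')
    have h1 := hsig i
    have h2 := hsig i'
    have h3 := (abs_le.mp habs).2
    linarith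
  have hcov_zero : ∀ i i' : Fin St.n, i' ∉ St.nbrs i →
      (∫ x, (St.w i x * (St.Yo i x - SNIPEAux.th St θ i))
          * (St.w i' x * (St.Yo i' x - SNIPEAux.th St θ i')) ∂St.μ)
        - (∫ x, St.w i x * (St.Yo i x - SNIPEAux.th St θ i) ∂St.μ)
          * (∫ x, St.w i' x * (St.Yo i' x - SNIPEAux.th St θ i') ∂St.μ) = 0 := by
    intro i i' hni
    have hd : Disjoint (St.Nb i) (St.Nb i') := by
      rw [Finset.disjoint_iff_inter_eq_empty]
      by_contra h
      exact hni (Finset.mem_filter.mpr ⟨Finset.mem_univ _,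
        Finset.nonempty_iff_ne_empty.mpr h⟩)
    rw [SNIPEAux.integral_Wf_mul St hp θ hd, sub_self]
  -- variance identity
  have hMem : MeasureTheory.MemLp (St.tteHat θ) 2 St.μ := by
    obtain ⟨hm, C, hC⟩ : SNIPEAux.BddM (St.tteHat θ) := by
      rw [hThat]
      exact (SNIPEAux.BddM.const _).mul (SNIPEAux.BddM.sum _ _ fun i _ => hBMW i)
    exact MeasureTheory.MemLp.of_bound hm.aestronglyMeasurable C
      (Filter.Eventually.of_forall fun x => by
        simpa [Real.norm_eq_abs] using hC x)
  have hvar : variance (St.tteHat θ) St.μ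
      = (((St.n : ℝ)) ^ 2)⁻¹ * ∑ i, ∑ i',
          ((∫ x, (St.w i x * (St.Yo i x - SNIPEAux.th St θ i))
              * (St.w i' x * (St.Yo i' x - SNIPEAux.th St θ i')) ∂St.μ)
            - (∫ x, St.w i x * (St.Yo i x - SNIPEAux.th St θ i) ∂St.μ)
              * (∫ x, St.w i' x * (St.Yo i' x - SNIPEAux.th St θ i') ∂St.μ)) := by
    rw [variance_eq_sub hMem]
    have hsq : ∫ x, (St.tteHat θ ^ 2) x ∂St.μ
        = (((St.n : ℝ)) ^ 2)⁻¹ * ∑ i, ∑ i',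
            ∫ x, (St.w i x * (St.Yo i x - SNIPEAux.th St θ i))
              * (St.w i' x * (St.Yo i' x - SNIPEAux.th St θ i')) ∂St.μ := by
      have h1 : (St.tteHat θ ^ 2)
          = fun x => (((St.n : ℝ)) ^ 2)⁻¹ * ∑ i, ∑ i',
              (St.w i x * (St.Yo i x - SNIPEAux.th St θ i))
                * (St.w i' x * (St.Yo i' x - SNIPEAux.th St θ i')) := by
        funext x
        have h2 : (St.tteHat θ ^ 2) x = (St.tteHat θ x) * (St.tteHat θ x) := by
          rw [Pi.pow_apply]; ring
        rw [h2, hThat]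
        rw [← Finset.sum_mul_sum Finset.univ Finset.univ
          (fun i => St.w i x * (St.Yo i x - SNIPEAux.th St θ i))
          (fun i' => St.w i' x * (St.Yo i' x - SNIPEAux.th St θ i'))]
        ring
      rw [h1, MeasureTheory.integral_const_mul,
        MeasureTheory.integral_finset_sum _ fun i _ =>
          (SNIPEAux.BddM.sum _ _ fun i' _ => (hBMW i).mul (hBMW i')).integrable]
      congr 1
      refine Finset.sum_congr rfl fun i _ => ?_
      exact MeasureTheory.integral_finset_sum _ fun i' _ => ((hBMW i).mul (hBMW i')).integrable
    have hfst : ∫ x, St.tteHat θ x ∂St.μ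
        = (St.n : ℝ)⁻¹ * ∑ i, ∫ x, St.w i x * (St.Yo i x - SNIPEAux.th St θ i) ∂St.μ := by
      rw [hThat, MeasureTheory.integral_const_mul,
        MeasureTheory.integral_finset_sum _ fun i _ => hint i]
    have hgoal : (∫ x, St.tteHat θ x ∂St.μ) ^ 2
        = (((St.n : ℝ)) ^ 2)⁻¹ * ∑ i, ∑ i',
            (∫ x, St.w i x * (St.Yo i x - SNIPEAux.th St θ i) ∂St.μ)
              * ∫ x, St.w i' x * (St.Yo i' x - SNIPEAux.th St θ i') ∂St.μ := by
      rw [hfst, ← Finset.sum_mul_sum]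
      ring
    show ∫ x, (St.tteHat θ ^ 2) x ∂St.μ - (∫ x, St.tteHat θ x ∂St.μ) ^ 2 = _
    rw [hsq, hgoal, ← mul_sub, ← Finset.sum_sub_distrib]
    congr 1
    refine Finset.sum_congr rfl fun i _ => ?_
    rw [← Finset.sum_sub_distrib]
  -- assemble
  have hr0 : (0 : ℝ) < 1 / (p * (1 - p)) := by
    have : (0:ℝ) < p * (1 - p) := mul_pos hp (by linarith)
    positivity
  have hKb0 : 0 ≤ Kb := by
    rw [hKdef]
    refine pow_nonneg ?_ β
    refine mul_nonneg (div_nonneg (mul_nonneg (Real.exp_pos 1).le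
      (Nat.cast_nonneg _)) (Nat.cast_nonneg _)) ?_
    exact le_trans hr0.le (le_max_right _ _)
  have hC0 : 0 ≤ A ^ 2 * (4 * Kb) := mul_nonneg (sq_nonneg _) (by linarith)
  have hinner : ∀ i : Fin St.n,
      ∑ i', ((∫ x, (St.w i x * (St.Yo i x - SNIPEAux.th St θ i))
              * (St.w i' x * (St.Yo i' x - SNIPEAux.th St θ i')) ∂St.μ)
            - (∫ x, St.w i x * (St.Yo i x - SNIPEAux.th St θ i) ∂St.μ)
              * (∫ x, St.w i' x * (St.Yo i' x - SNIPEAux.th St θ i') ∂St.μ))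
        ≤ (din * dout : ℕ) * (A ^ 2 * (4 * Kb)) := by
    intro i
    rw [← Finset.sum_subset (Finset.subset_univ (St.nbrs i))
      (fun i' _ h => hcov_zero i i' h)]
    calc _ ≤ ∑ _i' ∈ St.nbrs i, A ^ 2 * (4 * Kb) :=
          Finset.sum_le_sum fun i' _ => hcov_le i i'
      _ = (St.nbrs i).card * (A ^ 2 * (4 * Kb)) := by
          rw [Finset.sum_const, nsmul_eq_mul]
      _ ≤ (din * dout : ℕ) * (A ^ 2 * (4 * Kb)) := by
          refine mul_le_mul_of_nonneg_right ?_ hC0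
          have h1 : (St.nbrs i).card ≤ din * dout :=
            le_trans (SNIPEAux.nbrs_card_le St i dout hdout)
              (Nat.mul_le_mul_right dout (hdin i))
          exact_mod_cast h1
  rw [hvar]
  calc (((St.n : ℝ)) ^ 2)⁻¹ * ∑ i, ∑ i', _
      ≤ (((St.n : ℝ)) ^ 2)⁻¹ * ∑ _i : Fin St.n, ((din * dout : ℕ) * (A ^ 2 * (4 * Kb))) := by
        refine mul_le_mul_of_nonneg_left (Finset.sum_le_sum fun i _ => hinner i)
          (by positivity)
    _ = 4 * din * dout * A ^ 2 / St.n * Kb := by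
        rw [Finset.sum_const, Finset.card_univ, Fintype.card_fin, nsmul_eq_mul]
        push_cast
        field_simp
end
end

section
/- For any subsets S, S', T, T' of {1,…,n}, the covariance satisfies 0 ≤ Cov( ∏_{j∈S} (Z_j − p_j)/(p_j(1−p_j)) · ∏_{j'∈S'} Z_{j'} , ∏_{k∈T} (Z_k − p_k)/(p_k(1−p_k)) · ∏_{k'∈T'} Z_{k'} ) ≤ 1{S △ T ⊆ S' ∪ T'} · (1/(p(1−p)))^{|S ∩ T|}, where S △ T = (S ∪ T) \ (S ∩ T) denotes the symmetric difference and 1{·} is the indicator. -/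
noncomputable section

open MeasureTheory ProbabilityTheory Filter Finset Topology SNIPE



section Aux
variable {Ω : Type} [MeasurableSpace Ω]

lemma bern_integral (μ : Measure Ω) [IsProbabilityMeasure μ]
    (Z : Ω → ℝ) (hm : Measurable Z) (h01 : ∀ x, Z x = 0 ∨ Z x = 1)
    (q : ℝ) (hq0 : 0 ≤ q) (hZq : μ (Z ⁻¹' {1}) = ENNReal.ofReal q)
    (h : ℝ → ℝ) : ∫ x, h (Z x) ∂μ = q * h 1 + (1 - q) * h 0 := by
  have hA : MeasurableSet (Z ⁻¹' {1}) := hm (measurableSet_singleton 1)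
  have heq : (fun x => h (Z x)) =
      fun x => h 0 + (h 1 - h 0) * Set.indicator (Z ⁻¹' {1}) (fun _ => (1:ℝ)) x := by
    funext x
    rcases h01 x with h0 | h1
    · simp [Set.indicator, Set.mem_preimage, h0]
    · simp [Set.indicator, Set.mem_preimage, h1]
  have hint : Integrable (fun x => (h 1 - h 0) *
      Set.indicator (Z ⁻¹' {1}) (fun _ => (1:ℝ)) x) μ := by
    refine Integrable.const_mul ?_ _
    exact (integrable_const (1:ℝ)).indicator hA
  rw [heq, integral_add (integrable_const _) hint, integral_const, integral_const_mul,
    integral_indicator_const _ hA, measureReal_def, measureReal_def, hZq]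
  simp [ENNReal.toReal_ofReal hq0]
  ring

lemma prod_integral (μ : Measure Ω) [IsProbabilityMeasure μ] {n : ℕ}
    (Z : Fin n → Ω → ℝ) (hmeas : ∀ j, Measurable (Z j))
    (hindep : iIndepFun Z μ)
    (F : Fin n → ℝ → ℝ) (hF : ∀ j, Measurable (F j)) (s : Finset (Fin n)) :
    ∫ x, ∏ j ∈ s, F j (Z j x) ∂μ = ∏ j ∈ s, ∫ x, F j (Z j x) ∂μ := by
  have hind : iIndepFun (fun j => F j ∘ Z j) μ :=
    hindep.comp F hF
  have hm : ∀ j, Measurable (F j ∘ Z j) := fun j => (hF j).comp (hmeas j)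
  induction s using Finset.cons_induction with
  | empty => simp
  | cons a s ha ih =>
    have h1 : IndepFun (∏ j ∈ s, (F j ∘ Z j)) (F a ∘ Z a) μ :=
      hind.indepFun_finsetProd_of_notMem hm ha
    have h2 : (∏ j ∈ s, (F j ∘ Z j)) = fun x => ∏ j ∈ s, F j (Z j x) := by
      funext x; simp [Finset.prod_apply]
    have h4 : (fun x => ∏ j ∈ Finset.cons a s ha, F j (Z j x)) =
        (F a ∘ Z a) * (∏ j ∈ s, (F j ∘ Z j)) := by
      funext x; rw [Finset.prod_cons]; simp [Finset.prod_apply]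
    have h3 := h1.symm.integral_mul_eq_mul_integral (hm a).aestronglyMeasurable
      (by rw [h2]; exact (Finset.measurable_prod s (fun j _ => hm j)).aestronglyMeasurable)
    calc ∫ x, ∏ j ∈ Finset.cons a s ha, F j (Z j x) ∂μ
        = integral μ ((F a ∘ Z a) * (∏ j ∈ s, (F j ∘ Z j))) := by rw [← h4]
      _ = integral μ (F a ∘ Z a) * integral μ (∏ j ∈ s, (F j ∘ Z j)) := h3
      _ = ∏ j ∈ Finset.cons a s ha, ∫ x, F j (Z j x) ∂μ := by
          rw [h2, ih, Finset.prod_cons]; rfl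
end Aux




section Aux5

variable {n : ℕ}

set_option maxHeartbeats 1000000

/-- per-coordinate factor -/
noncomputable def Ff (prob : Fin n → ℝ) (S S' : Finset (Fin n)) (j : Fin n) (z : ℝ) : ℝ :=
  (if j ∈ S then (z - prob j) / (prob j * (1 - prob j)) else 1) * (if j ∈ S' then z else 1)

lemma Ff_meas (prob : Fin n → ℝ) (S S' : Finset (Fin n)) (j : Fin n) :
    Measurable (Ff prob S S' j) := by
  unfold Ff
  apply Measurable.mul
  · by_cases h : j ∈ S
    · simp only [h, if_true]; fun_prop
    · simp only [h, if_false]; fun_prop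
  · by_cases h : j ∈ S'
    · simp only [h, if_true]; fun_prop
    · simp only [h, if_false]; fun_prop

/-- per-coordinate expectation of the product -/
noncomputable def uu (prob : Fin n → ℝ) (S S' T T' : Finset (Fin n)) (j : Fin n) : ℝ :=
  prob j * (Ff prob S S' j 1 * Ff prob T T' j 1) +
    (1 - prob j) * (Ff prob S S' j 0 * Ff prob T T' j 0)

/-- per-coordinate product of expectations -/
noncomputable def vv (prob : Fin n → ℝ) (S S' T T' : Finset (Fin n)) (j : Fin n) : ℝ :=
  (prob j * Ff prob S S' j 1 + (1 - prob j) * Ff prob S S' j 0) *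
    (prob j * Ff prob T T' j 1 + (1 - prob j) * Ff prob T T' j 0)

section coord
variable {p : ℝ} {prob : Fin n → ℝ} {S S' T T' : Finset (Fin n)} {j : Fin n}
  (hp : 0 < p) (hp' : p ≤ 1 / 2) (hq1 : p ≤ prob j) (hq2 : prob j ≤ 1 - p)

include hp hp' hq1 hq2

lemma vv_nonneg : 0 ≤ vv prob S S' T T' j := by
  have hq0 : 0 < prob j := lt_of_lt_of_le hp hq1
  have h1q : 0 < 1 - prob j := by nlinarith
  have e1 : prob j * ((1 - prob j) / (prob j * (1 - prob j))) = 1 := by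
    field_simp <;> ring
  have e2 : (1 - prob j) * ((0 - prob j) / (prob j * (1 - prob j))) = -1 := by
    field_simp <;> ring
  by_cases hS : j ∈ S <;> by_cases hS' : j ∈ S' <;> by_cases hT : j ∈ T <;> by_cases hT' : j ∈ T' <;>
    simp only [vv, Ff, hS, hS', hT, hT', if_true, if_false, mul_one, mul_zero, one_mul,
      zero_mul, add_zero, zero_add] <;>
    nlinarith [e1, e2, hq0, h1q, mul_pos hq0 h1q]

lemma vv_le_uu : vv prob S S' T T' j ≤ uu prob S S' T T' j := by
  have hq0 : 0 < prob j := lt_of_lt_of_le hp hq1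
  have h1q : 0 < 1 - prob j := by nlinarith
  have e1 : prob j * ((1 - prob j) / (prob j * (1 - prob j))) = 1 := by
    field_simp <;> ring
  have e2 : (1 - prob j) * ((0 - prob j) / (prob j * (1 - prob j))) = -1 := by
    field_simp <;> ring
  by_cases hS : j ∈ S <;> by_cases hS' : j ∈ S' <;> by_cases hT : j ∈ T <;> by_cases hT' : j ∈ T' <;>
    simp only [uu, vv, Ff, hS, hS', hT, hT', if_true, if_false, mul_one, mul_zero, one_mul,
      zero_mul, add_zero, zero_add] <;>
    nlinarith [e1, e2, hq0, h1q, mul_pos hq0 h1q,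
      sq_nonneg ((1 - prob j) / (prob j * (1 - prob j))),
      sq_nonneg ((0 - prob j) / (prob j * (1 - prob j))),
      sq_nonneg ((1 - prob j) / (prob j * (1 - prob j)) - (0 - prob j) / (prob j * (1 - prob j))),
      sq_nonneg ((1 - prob j) / (prob j * (1 - prob j)) + (0 - prob j) / (prob j * (1 - prob j)))]

lemma uu_le : uu prob S S' T T' j ≤ if j ∈ S ∩ T then 1 / (p * (1 - p)) else 1 := by
  have hq0 : 0 < prob j := lt_of_lt_of_le hp hq1
  have h1q : 0 < 1 - prob j := by nlinarith
  have hpp : 0 < p * (1 - p) := by nlinarith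
  have hr : p * (1 - p) ≤ prob j * (1 - prob j) := by nlinarith
  have e1 : prob j * ((1 - prob j) / (prob j * (1 - prob j))) = 1 := by
    field_simp <;> ring
  have e2 : (1 - prob j) * ((0 - prob j) / (prob j * (1 - prob j))) = -1 := by
    field_simp <;> ring
  have e3 : (p * (1 - p)) * (1 / (p * (1 - p))) = 1 := by
    field_simp
    exact div_self (by linarith : (0:ℝ) < 1 - p).ne'
  have e4 : 0 < 1 / (p * (1 - p)) := by positivity
  have h16 : prob j * ((1 - prob j) / (prob j * (1 - prob j)) * ((1 - prob j) / (prob j * (1 - prob j))))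
      + (1 - prob j) * ((0 - prob j) / (prob j * (1 - prob j)) * ((0 - prob j) / (prob j * (1 - prob j))))
      = 1 / (prob j * (1 - prob j)) := by
    field_simp
    ring
  have h17 : 1 / (prob j * (1 - prob j)) ≤ 1 / (p * (1 - p)) :=
    one_div_le_one_div_of_le hpp hr
  have h18 : prob j * ((1 - prob j) / (prob j * (1 - prob j)) * ((1 - prob j) / (prob j * (1 - prob j))))
      = (1 - prob j) / (prob j * (1 - prob j)) := by
    field_simp
  have hA : (1 - prob j) / (prob j * (1 - prob j)) ≤ 1 / (p * (1 - p)) := by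
    rw [div_le_div_iff₀ (by positivity) hpp]
    nlinarith
  by_cases hS : j ∈ S <;> by_cases hS' : j ∈ S' <;> by_cases hT : j ∈ T <;> by_cases hT' : j ∈ T' <;>
    simp only [uu, Ff, mem_inter, hS, hS', hT, hT', if_true, if_false, true_and, and_true,
      false_and, and_false, mul_one, mul_zero, one_mul, zero_mul, add_zero, zero_add] <;>
    nlinarith [e1, e2, e3, e4, hr, hq0, h1q, hpp, mul_pos hq0 h1q, h16, h17, h18, hA,
      sq_nonneg ((1 - prob j) / (prob j * (1 - prob j))),
      sq_nonneg ((0 - prob j) / (prob j * (1 - prob j)))]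

lemma uu_eq_zero (hmem : j ∈ (S ∪ T) \ (S ∩ T)) (hnot : j ∉ S' ∪ T') :
    uu prob S S' T T' j = 0 := by
  have hq0 : 0 < prob j := lt_of_lt_of_le hp hq1
  have h1q : 0 < 1 - prob j := by nlinarith
  rw [Finset.mem_sdiff, mem_union, mem_inter] at hmem
  rw [mem_union] at hnot
  push_neg at hnot
  obtain ⟨hS', hT'⟩ := hnot
  obtain ⟨hST, hnand⟩ := hmem
  have hc : (j ∈ S ∧ j ∉ T) ∨ (j ∉ S ∧ j ∈ T) := by tauto
  rcases hc with ⟨hS, hT⟩ | ⟨hS, hT⟩ <;>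
    simp only [uu, Ff, hS, hS', hT, hT', if_true, if_false, mul_one, mul_zero, one_mul,
      zero_mul, add_zero, zero_add] <;>
    (field_simp <;> ring)

end coord
end Aux5


/-- Lemma 4 of Cortez-Rodriguez, Eichhorn and Yu: the covariance bound
`0 ≤ Cov(∏_(j∈S)(Z_j-p_j)/(p_j(1-p_j)) ∏_(j'∈S') Z_j', ∏_(k∈T)(Z_k-p_k)/(p_k(1-p_k)) ∏_(k'∈T') Z_k')
≤ 1{S △ T ⊆ S' ∪ T'} (1/(p(1-p)))^|S ∩ T|`. -/
theorem statement_5 {Ω : Type} [MeasurableSpace Ω]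
    (μ : Measure Ω) [IsProbabilityMeasure μ]
    (n : ℕ) (p : ℝ) (hp : 0 < p) (hp' : p ≤ 1 / 2)
    (prob : Fin n → ℝ) (hprob : ∀ j, p ≤ prob j ∧ prob j ≤ 1 - p)
    (Z : Fin n → Ω → ℝ) (hmeas : ∀ j, Measurable (Z j))
    (hindep : iIndepFun Z μ)
    (h01 : ∀ j x, Z j x = 0 ∨ Z j x = 1)
    (hZp : ∀ j, μ (Z j ⁻¹' {1}) = ENNReal.ofReal (prob j))
    (S S' T T' : Finset (Fin n)) :
    0 ≤ SNIPE.covr μ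
        (fun x => (∏ j ∈ S, (Z j x - prob j) / (prob j * (1 - prob j))) * ∏ j' ∈ S', Z j' x)
        (fun x => (∏ k ∈ T, (Z k x - prob k) / (prob k * (1 - prob k))) * ∏ k' ∈ T', Z k' x) ∧
    SNIPE.covr μ
        (fun x => (∏ j ∈ S, (Z j x - prob j) / (prob j * (1 - prob j))) * ∏ j' ∈ S', Z j' x)
        (fun x => (∏ k ∈ T, (Z k x - prob k) / (prob k * (1 - prob k))) * ∏ k' ∈ T', Z k' x) ≤
      (if (S ∪ T) \ (S ∩ T) ⊆ S' ∪ T' then (1 : ℝ) else 0) *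
        (1 / (p * (1 - p))) ^ (S ∩ T).card := by

  classical
  have hq0 : ∀ j, (0:ℝ) ≤ prob j := fun j => le_of_lt (lt_of_lt_of_le hp (hprob j).1)
  have hrepS : ∀ x, ∏ j, Ff prob S S' j (Z j x)
      = (∏ j ∈ S, (Z j x - prob j) / (prob j * (1 - prob j))) * ∏ j' ∈ S', Z j' x := by
    intro x
    simp only [Ff]
    rw [Finset.prod_mul_distrib, Fintype.prod_ite_mem, Fintype.prod_ite_mem]
  have hrepT : ∀ x, ∏ j, Ff prob T T' j (Z j x)
      = (∏ k ∈ T, (Z k x - prob k) / (prob k * (1 - prob k))) * ∏ k' ∈ T', Z k' x := by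
    intro x
    simp only [Ff]
    rw [Finset.prod_mul_distrib, Fintype.prod_ite_mem, Fintype.prod_ite_mem]
  have hIf : ∫ x, ∏ j, Ff prob S S' j (Z j x) ∂μ
      = ∏ j, (prob j * Ff prob S S' j 1 + (1 - prob j) * Ff prob S S' j 0) := by
    rw [prod_integral μ Z hmeas hindep _ (fun j => Ff_meas prob S S' j) Finset.univ]
    exact Finset.prod_congr rfl fun j _ =>
      bern_integral μ (Z j) (hmeas j) (h01 j) (prob j) (hq0 j) (hZp j) _
  have hIg : ∫ x, ∏ j, Ff prob T T' j (Z j x) ∂μ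
      = ∏ j, (prob j * Ff prob T T' j 1 + (1 - prob j) * Ff prob T T' j 0) := by
    rw [prod_integral μ Z hmeas hindep _ (fun j => Ff_meas prob T T' j) Finset.univ]
    exact Finset.prod_congr rfl fun j _ =>
      bern_integral μ (Z j) (hmeas j) (h01 j) (prob j) (hq0 j) (hZp j) _
  have hIfg : ∫ x, ∏ j, (Ff prob S S' j (Z j x) * Ff prob T T' j (Z j x)) ∂μ
      = ∏ j, uu prob S S' T T' j := by
    rw [prod_integral μ Z hmeas hindep (fun j z => Ff prob S S' j z * Ff prob T T' j z)
      (fun j => (Ff_meas prob S S' j).mul (Ff_meas prob T T' j)) Finset.univ]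
    exact Finset.prod_congr rfl fun j _ =>
      (bern_integral μ (Z j) (hmeas j) (h01 j) (prob j) (hq0 j) (hZp j)
        (fun z => Ff prob S S' j z * Ff prob T T' j z)).trans rfl
  have hcov : SNIPE.covr μ
      (fun x => (∏ j ∈ S, (Z j x - prob j) / (prob j * (1 - prob j))) * ∏ j' ∈ S', Z j' x)
      (fun x => (∏ k ∈ T, (Z k x - prob k) / (prob k * (1 - prob k))) * ∏ k' ∈ T', Z k' x)
      = (∏ j, uu prob S S' T T' j) - ∏ j, vv prob S S' T T' j := by
    simp only [SNIPE.covr]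
    have c1 : ∫ x, ((∏ j ∈ S, (Z j x - prob j) / (prob j * (1 - prob j))) * ∏ j' ∈ S', Z j' x) *
        ((∏ k ∈ T, (Z k x - prob k) / (prob k * (1 - prob k))) * ∏ k' ∈ T', Z k' x) ∂μ
        = ∏ j, uu prob S S' T T' j := by
      rw [← hIfg]
      refine integral_congr_ae (Filter.Eventually.of_forall fun x => ?_)
      beta_reduce
      rw [Finset.prod_mul_distrib, hrepS x, hrepT x]
    have c2 : ∫ x, (∏ j ∈ S, (Z j x - prob j) / (prob j * (1 - prob j))) * ∏ j' ∈ S', Z j' x ∂μ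
        = ∏ j, (prob j * Ff prob S S' j 1 + (1 - prob j) * Ff prob S S' j 0) := by
      rw [← hIf]
      exact integral_congr_ae (Filter.Eventually.of_forall fun x => (hrepS x).symm)
    have c3 : ∫ x, (∏ k ∈ T, (Z k x - prob k) / (prob k * (1 - prob k))) * ∏ k' ∈ T', Z k' x ∂μ
        = ∏ j, (prob j * Ff prob T T' j 1 + (1 - prob j) * Ff prob T T' j 0) := by
      rw [← hIg]
      exact integral_congr_ae (Filter.Eventually.of_forall fun x => (hrepT x).symm)
    rw [c1, c2, c3, ← Finset.prod_mul_distrib]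
    rfl
  have hvn : ∀ j : Fin n, 0 ≤ vv prob S S' T T' j := fun j =>
    vv_nonneg hp hp' (hprob j).1 (hprob j).2
  have hvu : ∀ j : Fin n, vv prob S S' T T' j ≤ uu prob S S' T T' j := fun j =>
    vv_le_uu hp hp' (hprob j).1 (hprob j).2
  have hun : ∀ j : Fin n, 0 ≤ uu prob S S' T T' j := fun j => le_trans (hvn j) (hvu j)
  have hprodle : (∏ j, vv prob S S' T T' j) ≤ ∏ j, uu prob S S' T T' j :=
    Finset.prod_le_prod (fun j _ => hvn j) (fun j _ => hvu j)
  have hprodv : (0:ℝ) ≤ ∏ j, vv prob S S' T T' j := Finset.prod_nonneg fun j _ => hvn j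
  constructor
  · rw [hcov]
    linarith
  · rw [hcov]
    by_cases hsub : (S ∪ T) \ (S ∩ T) ⊆ S' ∪ T'
    · rw [if_pos hsub, one_mul]
      have hb : (∏ j, uu prob S S' T T' j)
          ≤ ∏ j : Fin n, (if j ∈ S ∩ T then 1 / (p * (1 - p)) else 1) :=
        Finset.prod_le_prod (fun j _ => hun j)
          (fun j _ => uu_le hp hp' (hprob j).1 (hprob j).2)
      have hc : (∏ j : Fin n, (if j ∈ S ∩ T then 1 / (p * (1 - p)) else 1))
          = (1 / (p * (1 - p))) ^ (S ∩ T).card := by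
        rw [Fintype.prod_ite_mem]
        exact Finset.prod_const _
      linarith [hc ▸ hb]
    · rw [if_neg hsub, zero_mul]
      obtain ⟨j0, hj0, hj0'⟩ := Finset.not_subset.mp hsub
      have hz : (∏ j, uu prob S S' T T' j) = 0 :=
        Finset.prod_eq_zero (Finset.mem_univ j0)
          (uu_eq_zero hp hp' (hprob j0).1 (hprob j0).2 hj0 hj0')
      linarith
end
end
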